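/- arXiv:1109.1806 — 4 statements merged into one kernel-verified Lean document; each statement's English description precedes it below -/
import Mathlib

section
/- Let s = (s_i)_{i≥0} be a non-decreasing sequence of positive integers and let S be a step set that contains every horizontal step (a,0) with a ≥ 1 and satisfies the slope condition for s, i.e. for every (a,b) ∈ S with b > 0, every i ≥ 0 and every j with 1 ≤ j ≤ b one has b·(s_{i+j} − s_i + 1) > j·a. For m ≥ 0 let p_m be the number of S-paths from (0,0) to (s_m − 1, m) with boundary s, and let ℓ_m be the number of S-paths from (0,0) to (s_m − 1, m) with boundary s whose last step is horizontal (of the form (a,0) with a ≥ 1). Then for every n ≥ 1: a_{s_n−1,n} = p_n + Σ_{m=0}^{n−1} (p_m + ℓ_m) · Σ_{j=0}^{s_n−s_m−1} a_{j,n−m}. -/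
/-- x-coordinate of the `j`-th node of the path `p` (partial sum of first coordinates). -/
def xPart (p : List (ℕ × ℕ)) (j : ℕ) : ℕ := ((p.take j).map Prod.fst).sum

/-- y-coordinate of the `j`-th node of the path `p` (partial sum of second coordinates). -/
def yPart (p : List (ℕ × ℕ)) (j : ℕ) : ℕ := ((p.take j).map Prod.snd).sum

/-- `p` is an `S`-path from `(0,0)` to `(n,m)`. -/
def IsPath (S : Set (ℕ × ℕ)) (n m : ℕ) (p : List (ℕ × ℕ)) : Prop :=
  (∀ st ∈ p, st ∈ S) ∧ xPart p p.length = n ∧ yPart p p.length = m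

/-- `p` has (right) boundary `s`: every node `(x, i)` satisfies `x < s i`. -/
def HasBoundary (s : ℕ → ℕ) (p : List (ℕ × ℕ)) : Prop :=
  ∀ j ≤ p.length, xPart p j < s (yPart p j)

/-- The number of `S`-paths from `(0,0)` to `(n,m)`. -/
noncomputable def aCount (S : Set (ℕ × ℕ)) (n m : ℕ) : ℕ :=
  Set.ncard {p : List (ℕ × ℕ) | IsPath S n m p}

/-! ### Auxiliary definitions -/

def sx (p : List (ℕ × ℕ)) : ℕ := (p.map Prod.fst).sum
def sy (p : List (ℕ × ℕ)) : ℕ := (p.map Prod.snd).sum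

@[simp] lemma sx_nil : sx [] = 0 := rfl
@[simp] lemma sy_nil : sy [] = 0 := rfl
@[simp] lemma sx_cons (a : ℕ × ℕ) (l : List (ℕ × ℕ)) : sx (a :: l) = a.1 + sx l := rfl
@[simp] lemma sy_cons (a : ℕ × ℕ) (l : List (ℕ × ℕ)) : sy (a :: l) = a.2 + sy l := rfl
@[simp] lemma sx_append (l₁ l₂ : List (ℕ × ℕ)) : sx (l₁ ++ l₂) = sx l₁ + sx l₂ := by
  simp [sx]
@[simp] lemma sy_append (l₁ l₂ : List (ℕ × ℕ)) : sy (l₁ ++ l₂) = sy l₁ + sy l₂ := by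
  simp [sy]

lemma xPart_eq (p : List (ℕ × ℕ)) (j : ℕ) : xPart p j = sx (p.take j) := rfl
lemma yPart_eq (p : List (ℕ × ℕ)) (j : ℕ) : yPart p j = sy (p.take j) := rfl

lemma isPath_iff (S : Set (ℕ × ℕ)) (a b : ℕ) (p : List (ℕ × ℕ)) :
    IsPath S a b p ↔ (∀ st ∈ p, st ∈ S) ∧ sx p = a ∧ sy p = b := by
  simp [IsPath, xPart, yPart, sx, sy]

lemma hasBoundary_iff (s : ℕ → ℕ) (p : List (ℕ × ℕ)) :
    HasBoundary s p ↔ ∀ j ≤ p.length, sx (p.take j) < s (sy (p.take j)) := Iff.rfl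

lemma take_append_of_le {α : Type*} {l₁ l₂ : List α} {j : ℕ} (h : j ≤ l₁.length) :
    (l₁ ++ l₂).take j = l₁.take j := by
  rw [List.take_append, Nat.sub_eq_zero_of_le h, List.take_zero,
    List.append_nil]

lemma hasBoundary_prefix {s : ℕ → ℕ} {l₁ l₂ : List (ℕ × ℕ)}
    (h : HasBoundary s (l₁ ++ l₂)) : HasBoundary s l₁ := by
  intro j hj
  have := h j (by simp; omega)
  rwa [xPart_eq, yPart_eq, take_append_of_le hj] at this
  
/-! ### Finiteness -/

lemma le_sum_of_mem {l : List ℕ} {a : ℕ} (h : a ∈ l) : a ≤ l.sum := by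
  induction l with
  | nil => simp at h
  | cons b t ih =>
    rcases List.mem_cons.1 h with rfl | h
    · simp
    · have := ih h; simp; omega

lemma length_le_sum {p : List (ℕ × ℕ)} (h : ∀ st ∈ p, st ≠ ((0 : ℕ), (0 : ℕ))) :
    p.length ≤ sx p + sy p := by
  induction p with
  | nil => simp
  | cons a t ih =>
    have h1 : a ≠ ((0 : ℕ), (0 : ℕ)) := h a (by simp)
    have h2 : t.length ≤ sx t + sy t := ih fun st hst => h st (by simp [hst])
    have h3 : 1 ≤ a.1 + a.2 := by
      rcases a with ⟨x, y⟩
      by_contra hc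
      push_neg at hc
      exact h1 (by simp at hc ⊢; omega)
    simp only [List.length_cons, sx_cons, sy_cons]
    omega

lemma finite_paths (S : Set (ℕ × ℕ)) (h00 : (0, 0) ∉ S) (N M : ℕ) :
    {p : List (ℕ × ℕ) | (∀ st ∈ p, st ∈ S) ∧ sx p ≤ N ∧ sy p ≤ M}.Finite := by
  classical
  set T : Set (ℕ × ℕ) := ↑((Finset.range (N + 1)) ×ˢ (Finset.range (M + 1))) with hT
  haveI : Finite ↥T := by
    rw [hT]; exact FinsetCoe.fintype _ |>.finite
  have hfin : {l : List ↥T | l.length ≤ N + M}.Finite := List.finite_length_le _ _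
  have himg : ((List.map (Subtype.val) : List ↥T → List (ℕ × ℕ)) ''
      {l : List ↥T | l.length ≤ N + M}).Finite := hfin.image _
  apply Set.Finite.subset himg
  rintro p ⟨hS, hx, hy⟩
  have hmem : ∀ st ∈ p, st ∈ T := by
    intro st hst
    have h1 : st.1 ≤ sx p := le_sum_of_mem (List.mem_map_of_mem (f := Prod.fst) hst)
    have h2 : st.2 ≤ sy p := le_sum_of_mem (List.mem_map_of_mem (f := Prod.snd) hst)
    rw [hT]
    simp [Finset.mem_product]
    omega
  refine ⟨p.attach.map (fun x => ⟨x.1, hmem x.1 x.2⟩), ?_, ?_⟩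
  · simp only [Set.mem_setOf_eq, List.length_map, List.length_attach]
    have : p.length ≤ sx p + sy p :=
      length_le_sum fun st hst heq => h00 (heq ▸ hS st hst)
    omega
  · rw [List.map_map]
    have : (Subtype.val ∘ fun x : {x // x ∈ p} => (⟨x.1, hmem x.1 x.2⟩ : ↥T)) =
        fun x : {x // x ∈ p} => (x : ℕ × ℕ) := rfl
    rw [this, List.attach_map_subtype_val]

lemma finite_isPath (S : Set (ℕ × ℕ)) (h00 : (0, 0) ∉ S) (a b : ℕ) :
    {p : List (ℕ × ℕ) | IsPath S a b p}.Finite := by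
  apply (finite_paths S h00 a b).subset
  rintro p hp
  rw [Set.mem_setOf_eq, isPath_iff] at hp
  exact ⟨hp.1, le_of_eq hp.2.1, le_of_eq hp.2.2⟩

/-! ### Cardinality helpers -/

lemma ncard_prod' {α β : Type*} (s : Set α) (t : Set β) :
    (s ×ˢ t).ncard = s.ncard * t.ncard := by
  rw [← Nat.card_coe_set_eq, ← Nat.card_coe_set_eq, ← Nat.card_coe_set_eq,
    Nat.card_congr (Equiv.Set.prod s t), Nat.card_prod]

lemma ncard_biUnion' {ι α : Type*} (t : Finset ι) (f : ι → Set α)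
    (hf : ∀ i ∈ t, (f i).Finite)
    (hd : ∀ i ∈ t, ∀ j ∈ t, i ≠ j → Disjoint (f i) (f j)) :
    (⋃ i ∈ t, f i).ncard = ∑ i ∈ t, (f i).ncard := by
  classical
  induction t using Finset.induction with
  | empty => simp
  | @insert a u ha ih =>
    rw [Finset.sum_insert ha]
    have h1 : (⋃ i ∈ insert a u, f i) = f a ∪ ⋃ i ∈ u, f i := by
      simp [Set.iUnion_or, Set.iUnion_union_distrib]
    rw [h1, Set.ncard_union_eq ?_ ?_ ?_,
      ih (fun i hi => hf i (Finset.mem_insert_of_mem hi))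
        (fun i hi j hj => hd i (Finset.mem_insert_of_mem hi) j (Finset.mem_insert_of_mem hj))]
    · rw [Set.disjoint_iUnion_right]
      intro i
      rw [Set.disjoint_iUnion_right]
      intro hi
      exact hd a (Finset.mem_insert_self a u) i (Finset.mem_insert_of_mem hi)
        (fun h => ha (h ▸ hi))
    · exact hf a (Finset.mem_insert_self a u)
    · exact Set.Finite.biUnion u.finite_toSet
        (fun i hi => hf i (Finset.mem_insert_of_mem hi))
/-! ### The decomposition -/

def Qset (S : Set (ℕ × ℕ)) (s : ℕ → ℕ) (m : ℕ) : Set (List (ℕ × ℕ)) :=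
  {q | (∀ st ∈ q, st ∈ S) ∧ HasBoundary s q ∧ sy q = m}

def Rset (S : Set (ℕ × ℕ)) (s : ℕ → ℕ) (n m : ℕ) : Set (List (ℕ × ℕ)) :=
  {r | (∀ st ∈ r, st ∈ S) ∧ sy r = n - m ∧ sx r < s n - s m}

def phi (s : ℕ → ℕ) (n : ℕ) (qr : List (ℕ × ℕ) × List (ℕ × ℕ)) : List (ℕ × ℕ) :=
  qr.1 ++ (s n - 1 - sx qr.2 - sx qr.1, 0) :: qr.2

/-- violation at node `k` -/
def V (s : ℕ → ℕ) (P : List (ℕ × ℕ)) (k : ℕ) : Prop :=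
  s (sy (P.take k)) ≤ sx (P.take k)

instance (s : ℕ → ℕ) (P : List (ℕ × ℕ)) : DecidablePred (V s P) := fun _ => by
  unfold V; infer_instance

open scoped Classical in
/-- index of the first violating node (0 if none) -/
noncomputable def fvk (s : ℕ → ℕ) (P : List (ℕ × ℕ)) : ℕ :=
  if h : ∃ k, V s P k then Nat.find h else 0

lemma sxq_lt {S s m} {q : List (ℕ × ℕ)} (hq : q ∈ Qset S s m) : sx q < s m := by
  obtain ⟨-, hB, hy⟩ := hq
  have := hB q.length le_rfl
  rwa [xPart_eq, yPart_eq, List.take_length, hy] at this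

section Main

variable {s : ℕ → ℕ} {S : Set (ℕ × ℕ)} {n : ℕ}
variable (hmono : Monotone s) (hpos : ∀ i, 0 < s i) (h00 : (0, 0) ∉ S)
  (hhoriz : ∀ a : ℕ, 1 ≤ a → (a, 0) ∈ S)

include hmono hpos hhoriz

/-- Main forward lemma: the glued path is a path, with prescribed first violation. -/
lemma phi_spec {m : ℕ} (hm : m < n) {q r : List (ℕ × ℕ)}
    (hq : q ∈ Qset S s m) (hr : r ∈ Rset S s n m) :
    IsPath S (s n - 1) n (phi s n (q, r)) ∧
    (∀ i ≤ q.length, ¬ V s (phi s n (q, r)) i) ∧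
    V s (phi s n (q, r)) (q.length + 1) ∧
    sy ((phi s n (q, r)).take (q.length + 1)) = m ∧
    q.length + 1 ≤ (phi s n (q, r)).length := by
  obtain ⟨hqS, hqB, hqy⟩ := hq
  obtain ⟨hrS, hry, hrx⟩ := hr
  have hqx : sx q < s m := sxq_lt ⟨hqS, hqB, hqy⟩
  have hsm : s m ≤ s n := hmono hm.le
  have hsm1 : 1 ≤ s m := hpos m
  set a : ℕ := s n - 1 - sx r - sx q with ha
  have ha1 : 1 ≤ a := by omega
  have haval : sx q + a + sx r = s n - 1 := by omega
  set P : List (ℕ × ℕ) := phi s n (q, r) with hP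
  have hPdef : P = q ++ (a, 0) :: r := rfl
  have htake1 : P.take (q.length + 1) = q ++ [(a, 0)] := by
    rw [hPdef, show q ++ (a, 0) :: r = (q ++ [(a, 0)]) ++ r by simp]
    exact List.take_left' (by simp)
  have hsytake : sy (P.take (q.length + 1)) = m := by
    rw [htake1]; simp [hqy]
  have hsxtake : sx (P.take (q.length + 1)) = s n - 1 - sx r := by
    rw [htake1]; simp; omega
  refine ⟨?_, ?_, ?_, hsytake, ?_⟩
  · rw [isPath_iff]
    refine ⟨?_, ?_, ?_⟩
    · intro st hst
      rw [hPdef] at hst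
      rcases List.mem_append.1 hst with h | h
      · exact hqS st h
      · rcases List.mem_cons.1 h with rfl | h
        · exact hhoriz a ha1
        · exact hrS st h
    · rw [hPdef]; simp only [sx_append, sx_cons]; omega
    · rw [hPdef]; simp only [sy_append, sy_cons, hqy, hry]; omega
  · intro i hi
    have : P.take i = q.take i := by
      rw [hPdef]; exact take_append_of_le hi
    unfold V
    rw [this]
    have := hqB i hi
    rw [xPart_eq, yPart_eq] at this
    omega
  · unfold V
    rw [hsytake, hsxtake]
    omega
  · rw [hPdef]; simp only [List.length_append, List.length_cons]; omega

lemma phi_fvk {m : ℕ} (hm : m < n) {q r : List (ℕ × ℕ)}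
    (hq : q ∈ Qset S s m) (hr : r ∈ Rset S s n m) :
    fvk s (phi s n (q, r)) = q.length + 1 := by
  obtain ⟨-, hnotV, hV, -, -⟩ := phi_spec hmono hpos hhoriz hm hq hr
  have hex : ∃ k, V s (phi s n (q, r)) k := ⟨q.length + 1, hV⟩
  rw [fvk, dif_pos hex, Nat.find_eq_iff]
  exact ⟨hV, fun i hi => hnotV i (by omega)⟩

/-- data recovery from a glued path -/
lemma phi_recover {m : ℕ} (hm : m < n) {q r : List (ℕ × ℕ)}
    (hq : q ∈ Qset S s m) (hr : r ∈ Rset S s n m) :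
    let P := phi s n (q, r)
    sy (P.take (fvk s P)) = m ∧ P.take (fvk s P - 1) = q ∧ P.drop (fvk s P) = r := by
  intro P
  have hk : fvk s P = q.length + 1 := phi_fvk hmono hpos hhoriz hm hq hr
  obtain ⟨-, -, -, hsyt, -⟩ := phi_spec hmono hpos hhoriz hm hq hr
  refine ⟨by rw [hk]; exact hsyt, ?_, ?_⟩
  · rw [hk]
    simp only [Nat.add_sub_cancel]
    show (q ++ (s n - 1 - sx r - sx q, 0) :: r).take q.length = q
    exact List.take_left' rfl
  · rw [hk]
    show (q ++ (s n - 1 - sx r - sx q, 0) :: r).drop (q.length + 1) = r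
    rw [show q ++ (s n - 1 - sx r - sx q, 0) :: r
        = (q ++ [(s n - 1 - sx r - sx q, 0)]) ++ r by simp]
    exact List.drop_left' (by simp)

/-- A glued path violates the boundary. -/
lemma phi_not_boundary {m : ℕ} (hm : m < n) {q r : List (ℕ × ℕ)}
    (hq : q ∈ Qset S s m) (hr : r ∈ Rset S s n m) :
    ¬ HasBoundary s (phi s n (q, r)) := by
  obtain ⟨-, -, hV, -, hlen⟩ := phi_spec hmono hpos hhoriz hm hq hr
  intro hB
  have := hB (q.length + 1) hlen
  rw [xPart_eq, yPart_eq] at this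
  exact absurd hV (by unfold V; omega)

end Main
section Decomp

variable {s : ℕ → ℕ} {S : Set (ℕ × ℕ)} {n : ℕ}
variable (hmono : Monotone s) (hpos : ∀ i, 0 < s i) (h00 : (0, 0) ∉ S)
  (hslope : ∀ a b : ℕ, (a, b) ∈ S → 0 < b →
      ∀ i j : ℕ, 1 ≤ j → j ≤ b → j * a < b * (s (i + j) - s i + 1))

include hmono hpos h00 hslope

lemma decomp {P : List (ℕ × ℕ)} (hP : IsPath S (s n - 1) n P)
    (hnB : ¬ HasBoundary s P) :
    ∃ m < n, ∃ q ∈ Qset S s m, ∃ r ∈ Rset S s n m, P = phi s n (q, r) := by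
  classical
  rw [isPath_iff] at hP
  obtain ⟨hS, hsxP, hsyP⟩ := hP
  rw [HasBoundary] at hnB
  push_neg at hnB
  obtain ⟨j, hjlen, hjv⟩ := hnB
  rw [xPart_eq, yPart_eq] at hjv
  have hex : ∃ k, V s P k := ⟨j, by unfold V; omega⟩
  set k0 := Nat.find hex with hk0def
  have hV : V s P k0 := Nat.find_spec hex
  have hmin : ∀ i < k0, ¬ V s P i := fun i hi => Nat.find_min hex hi
  have hk0le : k0 ≤ j := Nat.find_min' hex (by unfold V; omega)
  have hk01 : 1 ≤ k0 := by
    rcases Nat.eq_zero_or_pos k0 with h | h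
    · exfalso
      have := hV
      rw [h] at this
      unfold V at this
      simp at this
      have := hpos 0
      omega
    · exact h
  set c := k0 - 1 with hcdef
  have hck0 : k0 = c + 1 := by omega
  have hc : c < P.length := by omega
  set st := P[c]'hc with hstdef
  have htk : P.take (c + 1) = P.take c ++ [st] := by
    rw [List.take_succ, List.getElem?_eq_getElem hc]
    rfl
  have hsxk : sx (P.take k0) = sx (P.take c) + st.1 := by
    rw [hck0, htk]; simp
  have hsyk : sy (P.take k0) = sy (P.take c) + st.2 := by
    rw [hck0, htk]; simp
  have hnotc : sx (P.take c) < s (sy (P.take c)) := by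
    have := hmin c (by omega)
    unfold V at this
    omega
  have hstS : st ∈ S := hS st (List.getElem_mem hc)
  have hVk : s (sy (P.take k0)) ≤ sx (P.take k0) := hV
  -- the step reaching the first violation is horizontal
  have hst2 : st.2 = 0 := by
    by_contra h2
    have h2' : 0 < st.2 := Nat.pos_of_ne_zero h2
    have hsl := hslope st.1 st.2 (by rwa [← Prod.mk.eta (p := st)] at hstS) h2'
      (sy (P.take c)) st.2 h2' le_rfl
    have hlt : st.1 < s (sy (P.take c) + st.2) - s (sy (P.take c)) + 1 :=
      Nat.lt_of_mul_lt_mul_left hsl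
    have hm' : s (sy (P.take c)) ≤ s (sy (P.take c) + st.2) :=
      hmono (Nat.le_add_right _ _)
    rw [hsyk, hsxk] at hVk
    omega
  have hst1 : 1 ≤ st.1 := by
    by_contra h1
    push_neg at h1
    have h0 : st.1 = 0 := by omega
    have : st = ((0 : ℕ), (0 : ℕ)) := Prod.ext h0 hst2
    exact h00 (this ▸ hstS)
  set m := sy (P.take c) with hmdef
  have hym : sy (P.take k0) = m := by omega
  have hsplitx : sx (P.take k0) + sx (P.drop k0) = s n - 1 := by
    rw [← sx_append, List.take_append_drop, hsxP]
  have hsplity : sy (P.take k0) + sy (P.drop k0) = n := by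
    rw [← sy_append, List.take_append_drop, hsyP]
  have hsm : s m ≤ sx (P.take k0) := by rw [hym] at hVk; exact hVk
  have hsm_lt : s m ≤ s n - 1 := by omega
  have hmn : m < n := by
    have hmlen : m ≤ n := by
      rw [← hym]; omega
    rcases Nat.lt_or_ge m n with h | h
    · exact h
    · exfalso
      have : m = n := le_antisymm hmlen h
      rw [this] at hsm_lt
      have := hpos n
      omega
  refine ⟨m, hmn, P.take c, ⟨?_, ?_, rfl⟩, P.drop k0, ⟨?_, ?_, ?_⟩, ?_⟩
  · exact fun stp hstp => hS stp (List.take_subset c P hstp)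
  · intro i hi
    have hic : i ≤ c := by
      have : (P.take c).length = c := by
        rw [List.length_take]; omega
      omega
    have heq : (P.take c).take i = P.take i := by
      rw [List.take_take]
      congr 1
      omega
    rw [xPart_eq, yPart_eq, heq]
    have := hmin i (by omega)
    unfold V at this
    omega
  · exact fun stp hstp => hS stp (List.drop_subset k0 P hstp)
  · omega
  · have h1 : 1 ≤ s n := hpos n
    have h1m : 1 ≤ s m := hpos m
    omega
  · show P = P.take c ++ (s n - 1 - sx (P.drop k0) - sx (P.take c), 0) :: P.drop k0
    have hA : s n - 1 - sx (P.drop k0) - sx (P.take c) = st.1 := by omega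
    have hkey : P.take c ++ st :: P.drop (c + 1) = P := by
      conv_rhs => rw [← List.take_append_drop (c + 1) P]
      rw [htk]
      simp
    rw [hA, ← hst2, Prod.mk.eta, show P.drop k0 = P.drop (c + 1) from by rw [hck0]]
    exact hkey.symm

end Decomp
section Cards

variable {s : ℕ → ℕ} {S : Set (ℕ × ℕ)} {n : ℕ}

lemma Qset_finite (hpos : ∀ i, 0 < s i) (h00 : (0, 0) ∉ S) (m : ℕ) :
    (Qset S s m).Finite := by
  apply (finite_paths S h00 (s m) m).subset
  rintro q hq
  exact ⟨hq.1, (sxq_lt hq).le, le_of_eq hq.2.2⟩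

lemma Qset_card (hpos : ∀ i, 0 < s i) (h00 : (0, 0) ∉ S)
    (hhoriz : ∀ a : ℕ, 1 ≤ a → (a, 0) ∈ S) (m : ℕ) :
    (Qset S s m).ncard =
      {p : List (ℕ × ℕ) | IsPath S (s m - 1) m p ∧ HasBoundary s p}.ncard +
      {p : List (ℕ × ℕ) | IsPath S (s m - 1) m p ∧ HasBoundary s p ∧
        ∃ a : ℕ, 1 ≤ a ∧ p.getLast? = some (a, 0)}.ncard := by
  classical
  set Qeq := {q ∈ Qset S s m | sx q = s m - 1} with hQeq
  set Qlt := {q ∈ Qset S s m | sx q < s m - 1} with hQlt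
  have hsplit : Qset S s m = Qeq ∪ Qlt := by
    apply Set.Subset.antisymm
    · intro q hq
      have := sxq_lt hq
      rcases Nat.lt_or_ge (sx q) (s m - 1) with h | h
      · exact Or.inr ⟨hq, h⟩
      · exact Or.inl ⟨hq, by omega⟩
    · rintro q (⟨hq, -⟩ | ⟨hq, -⟩) <;> exact hq
  have hfin : (Qset S s m).Finite := Qset_finite hpos h00 m
  have hdisj : Disjoint Qeq Qlt := by
    rw [Set.disjoint_left]
    rintro q ⟨-, h1⟩ ⟨-, h2⟩
    omega
  have hQeqP : Qeq = {p : List (ℕ × ℕ) | IsPath S (s m - 1) m p ∧ HasBoundary s p} := by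
    ext q
    simp only [hQeq, Set.mem_setOf_eq, Set.mem_sep_iff, isPath_iff]
    constructor
    · rintro ⟨⟨hS, hB, hy⟩, hx⟩
      exact ⟨⟨hS, hx, hy⟩, hB⟩
    · rintro ⟨⟨hS, hx, hy⟩, hB⟩
      exact ⟨⟨hS, hB, hy⟩, hx⟩
  set ψ := fun q : List (ℕ × ℕ) => q ++ [(s m - 1 - sx q, 0)] with hψ
  have hinj : Set.InjOn ψ Qlt := by
    intro q hq q' hq' heq
    have := congrArg List.dropLast heq
    simpa only [hψ, List.dropLast_concat] using this
  have himg : ψ '' Qlt = {p : List (ℕ × ℕ) | IsPath S (s m - 1) m p ∧ HasBoundary s p ∧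
      ∃ a : ℕ, 1 ≤ a ∧ p.getLast? = some (a, 0)} := by
    apply Set.Subset.antisymm
    · rintro p ⟨q, ⟨⟨hS, hB, hy⟩, hlt⟩, rfl⟩
      have hqx : sx q < s m := sxq_lt ⟨hS, hB, hy⟩
      set c := s m - 1 - sx q with hc
      have hc1 : 1 ≤ c := by omega
      have hBnew : HasBoundary s (q ++ [(c, 0)]) := by
        intro i hi
        rw [List.length_append, List.length_cons, List.length_nil] at hi
        rw [xPart_eq, yPart_eq]
        rcases Nat.lt_or_ge i (q.length + 1) with h | h
        · rw [take_append_of_le (by omega)]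
          have := hB i (by omega)
          rw [xPart_eq, yPart_eq] at this
          exact this
        · have : i = q.length + 1 := by omega
          rw [this, List.take_of_length_le (by simp)]
          simp only [sx_append, sy_append, sx_cons, sy_cons, sx_nil, sy_nil, hy,
            Nat.add_zero, Nat.zero_add]
          have := hpos m
          omega
      refine ⟨⟨?_, ?_, ?_⟩, hBnew, c, hc1, List.getLast?_concat⟩
      · intro st hst
        rcases List.mem_append.1 hst with h | h
        · exact hS st h
        · rcases List.mem_cons.1 h with rfl | h
          · exact hhoriz c hc1
          · simp at h
      · rw [xPart_eq, List.take_length]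
        simp only [hψ, sx_append, sx_cons, sx_nil]
        omega
      · rw [yPart_eq, List.take_length]
        simp only [hψ, sy_append, sy_cons, sy_nil]
        omega
    · rintro p ⟨hP, hB, a, ha, hlast⟩
      rw [isPath_iff] at hP
      obtain ⟨hS, hx, hy⟩ := hP
      have hne : p ≠ [] := by
        intro h
        rw [h] at hlast
        simp at hlast
      have hlast' : p.getLast hne = (a, 0) := by
        have := List.getLast?_eq_getLast hne
        rw [hlast] at this
        exact (Option.some.inj this).symm
      have hsplit' : p.dropLast ++ [(a, 0)] = p := by
        rw [← hlast']
        exact List.dropLast_append_getLast hne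
      set q := p.dropLast with hq
      have hxq : sx q + a = s m - 1 := by
        rw [← hx, ← hsplit']
        simp
      have hyq : sy q = m := by
        have : sy q + 0 = m := by
          rw [← hy, ← hsplit']; simp
        omega
      have hBq : HasBoundary s q := hasBoundary_prefix (l₂ := [(a, 0)]) (by rwa [hsplit'])
      refine ⟨q, ⟨⟨?_, hBq, hyq⟩, by omega⟩, ?_⟩
      · intro st hst
        exact hS st ((List.dropLast_sublist p).subset hst)
      · show q ++ [(s m - 1 - sx q, 0)] = p
        rw [show s m - 1 - sx q = a from by omega]
        exact hsplit'
  rw [hsplit, Set.ncard_union_eq hdisj (hfin.subset (by rw [hsplit]; exact Set.subset_union_left))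
    (hfin.subset (by rw [hsplit]; exact Set.subset_union_right)), hQeqP, ← himg,
    Set.ncard_image_of_injOn hinj]

lemma Rset_finite (h00 : (0, 0) ∉ S) (m : ℕ) : (Rset S s n m).Finite := by
  apply (finite_paths S h00 (s n) (n - m)).subset
  rintro r hr
  exact ⟨hr.1, by have := hr.2.2; omega, le_of_eq hr.2.1⟩

lemma Rset_card (h00 : (0, 0) ∉ S) (m : ℕ) :
    (Rset S s n m).ncard = ∑ j ∈ Finset.range (s n - s m), aCount S j (n - m) := by
  classical
  have hsplit : Rset S s n m =
      ⋃ j ∈ Finset.range (s n - s m), {r : List (ℕ × ℕ) | IsPath S j (n - m) r} := by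
    ext r
    simp only [Rset, Set.mem_setOf_eq, Set.mem_iUnion, Finset.mem_range, isPath_iff,
      exists_prop]
    constructor
    · rintro ⟨hS, hy, hx⟩
      exact ⟨sx r, hx, hS, rfl, hy⟩
    · rintro ⟨j, hj, hS, hx, hy⟩
      exact ⟨hS, hy, by omega⟩
  rw [hsplit, ncard_biUnion']
  · rfl
  · exact fun j _ => finite_isPath S h00 j (n - m)
  · intro i _ j _ hij
    rw [Set.disjoint_left]
    rintro r h1 h2
    rw [Set.mem_setOf_eq, isPath_iff] at h1 h2
    exact hij (h1.2.1 ▸ h2.2.1)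

end Cards
section Final

variable {s : ℕ → ℕ} {S : Set (ℕ × ℕ)} {n : ℕ}
variable (hmono : Monotone s) (hpos : ∀ i, 0 < s i)
  (hhoriz : ∀ a : ℕ, 1 ≤ a → (a, 0) ∈ S)

include hmono hpos hhoriz

lemma phi_injOn {m : ℕ} (hm : m < n) :
    Set.InjOn (phi s n) (Qset S s m ×ˢ Rset S s n m) := by
  rintro ⟨q, r⟩ hqr ⟨q', r'⟩ hqr' heq
  rw [Set.mem_prod] at hqr hqr'
  obtain ⟨hq, hr⟩ := hqr
  obtain ⟨hq', hr'⟩ := hqr'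
  obtain ⟨-, ht, hd⟩ := phi_recover hmono hpos hhoriz hm hq hr
  obtain ⟨-, ht', hd'⟩ := phi_recover hmono hpos hhoriz hm hq' hr'
  have h1 : List.take (fvk s (phi s n (q, r)) - 1) (phi s n (q, r)) = q := ht
  have h2 : List.take (fvk s (phi s n (q', r')) - 1) (phi s n (q', r')) = q' := ht'
  have h3 : List.drop (fvk s (phi s n (q, r))) (phi s n (q, r)) = r := hd
  have h4 : List.drop (fvk s (phi s n (q', r'))) (phi s n (q', r')) = r' := hd'
  rw [heq] at h1 h3
  have hqq : q = q' := h1.symm.trans h2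
  have hrr : r = r' := h3.symm.trans h4
  rw [hqq, hrr]

lemma D_m_eq {m : ℕ} (hm : m < n) {P : List (ℕ × ℕ)}
    (hP : P ∈ phi s n '' (Qset S s m ×ˢ Rset S s n m)) :
    sy (P.take (fvk s P)) = m := by
  obtain ⟨⟨q, r⟩, hqr, rfl⟩ := hP
  rw [Set.mem_prod] at hqr
  exact (phi_recover hmono hpos hhoriz hm hqr.1 hqr.2).1

end Final

theorem stmt0 (s : ℕ → ℕ) (hmono : Monotone s) (hpos : ∀ i, 0 < s i)
    (S : Set (ℕ × ℕ)) (h00 : (0, 0) ∉ S)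
    (hhoriz : ∀ a : ℕ, 1 ≤ a → (a, 0) ∈ S)
    (hslope : ∀ a b : ℕ, (a, b) ∈ S → 0 < b →
      ∀ i j : ℕ, 1 ≤ j → j ≤ b → j * a < b * (s (i + j) - s i + 1))
    (pB ℓ : ℕ → ℕ)
    (hp : ∀ m, pB m =
      Set.ncard {p : List (ℕ × ℕ) | IsPath S (s m - 1) m p ∧ HasBoundary s p})
    (hℓ : ∀ m, ℓ m =
      Set.ncard {p : List (ℕ × ℕ) | IsPath S (s m - 1) m p ∧ HasBoundary s p ∧
        ∃ a : ℕ, 1 ≤ a ∧ p.getLast? = some (a, 0)})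
    (n : ℕ) (hn : 1 ≤ n) :
    aCount S (s n - 1) n =
      pB n + ∑ m ∈ Finset.range n,
        (pB m + ℓ m) * ∑ j ∈ Finset.range (s n - s m), aCount S j (n - m) := by
  classical
  set A := {p : List (ℕ × ℕ) | IsPath S (s n - 1) n p} with hA
  set B := {p : List (ℕ × ℕ) | IsPath S (s n - 1) n p ∧ HasBoundary s p} with hB
  set D : ℕ → Set (List (ℕ × ℕ)) :=
    fun m => phi s n '' (Qset S s m ×ˢ Rset S s n m) with hD
  have hAfin : A.Finite := finite_isPath S h00 _ _
  have hDsub : ∀ m ∈ Finset.range n, D m ⊆ A := by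
    rintro m hm P ⟨⟨q, r⟩, hqr, rfl⟩
    rw [Set.mem_prod] at hqr
    exact (phi_spec hmono hpos hhoriz (Finset.mem_range.1 hm) hqr.1 hqr.2).1
  have hcover : A = B ∪ ⋃ m ∈ Finset.range n, D m := by
    apply Set.Subset.antisymm
    · intro P hP
      by_cases hBd : HasBoundary s P
      · exact Or.inl ⟨hP, hBd⟩
      · right
        obtain ⟨m, hm, q, hq, r, hr, rfl⟩ := decomp hmono hpos h00 hslope hP hBd
        exact Set.mem_biUnion (Finset.mem_range.2 hm)
          ⟨(q, r), Set.mem_prod.2 ⟨hq, hr⟩, rfl⟩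
    · rintro P (h | h)
      · exact h.1
      · obtain ⟨s', ⟨m, rfl⟩, hs'⟩ := h
        obtain ⟨t, ⟨hm, rfl⟩, ht⟩ := hs'
        exact hDsub m hm ht
  have hDnotB : ∀ m ∈ Finset.range n, ∀ P ∈ D m, ¬ HasBoundary s P := by
    rintro m hm P ⟨⟨q, r⟩, hqr, rfl⟩
    rw [Set.mem_prod] at hqr
    exact phi_not_boundary hmono hpos hhoriz (Finset.mem_range.1 hm) hqr.1 hqr.2
  have hdisjBU : Disjoint B (⋃ m ∈ Finset.range n, D m) := by
    rw [Set.disjoint_left]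
    rintro P hPB hPU
    obtain ⟨s', ⟨m, rfl⟩, hs'⟩ := hPU
    obtain ⟨t, ⟨hm, rfl⟩, ht⟩ := hs'
    exact hDnotB m hm P ht hPB.2
  have hDdisj : ∀ m ∈ Finset.range n, ∀ m' ∈ Finset.range n, m ≠ m' →
      Disjoint (D m) (D m') := by
    intro m hm m' hm' hne
    rw [Set.disjoint_left]
    intro P h1 h2
    have e1 := D_m_eq hmono hpos hhoriz (Finset.mem_range.1 hm) h1
    have e2 := D_m_eq hmono hpos hhoriz (Finset.mem_range.1 hm') h2
    exact hne (e1 ▸ e2 ▸ rfl)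
  have hUfin : (⋃ m ∈ Finset.range n, D m).Finite :=
    Set.Finite.biUnion (Finset.range n).finite_toSet
      (fun m hm => hAfin.subset (hDsub m hm))
  have hcard : A.ncard = B.ncard + ∑ m ∈ Finset.range n, (D m).ncard := by
    rw [hcover, Set.ncard_union_eq hdisjBU (hAfin.subset (by rw [hcover]; exact
      Set.subset_union_left)) hUfin,
      ncard_biUnion' _ _ (fun m hm => hAfin.subset (hDsub m hm)) hDdisj]
  have hDcard : ∀ m ∈ Finset.range n, (D m).ncard =
      (pB m + ℓ m) * ∑ j ∈ Finset.range (s n - s m), aCount S j (n - m) := by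
    intro m hm
    rw [hD]
    simp only
    rw [Set.ncard_image_of_injOn (phi_injOn hmono hpos hhoriz (Finset.mem_range.1 hm)),
      ncard_prod', Qset_card hpos h00 hhoriz m, Rset_card h00 m, hp, hℓ]
  show A.ncard = _
  rw [hcard, hp n, Finset.sum_congr rfl hDcard]
end

section
/- Let S be a step set that contains every horizontal step (a,0) with a ≥ 1 and such that every (a,b) ∈ S with b > 0 satisfies a ≤ b (the slope condition for the Catalan boundary (i+1)). Let P(t) = Σ_{n≥0} p_n tⁿ, let T(t) = Σ_{a≥1, (a,a)∈S} tᵃ, let E_0(t) be the formal power series whose coefficient of tⁿ is Σ_{j=0}^{n} a_{j,n}, and let E_1(t) be the formal power series whose coefficient of tⁿ is Σ_{j=0}^{n−1} a_{j,n} (so E_1 has zero constant term). Then in ℚ⟦t⟧: P(t) · (1 + (2 − T(t)) · E_1(t)) = E_0(t). -/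
/-- `p` is Catalan: every node `(x, y)` satisfies `x ≤ y`. -/
def IsCatalan (p : List (ℕ × ℕ)) : Prop :=
  ∀ j ≤ p.length, xPart p j ≤ yPart p j

/-- The number of Catalan `S`-paths from `(0,0)` to `(n,n)`. -/
noncomputable def pCatalan (S : Set (ℕ × ℕ)) (n : ℕ) : ℕ :=
  Set.ncard {p : List (ℕ × ℕ) | IsPath S n n p ∧ IsCatalan p}

namespace StmtAux

attribute [local instance] Classical.propDecidable

abbrev L := List (ℕ × ℕ)

def xT (p : L) : ℕ := (p.map Prod.fst).sum
def yT (p : L) : ℕ := (p.map Prod.snd).sum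

@[simp] lemma xT_nil : xT [] = 0 := rfl
@[simp] lemma yT_nil : yT [] = 0 := rfl
@[simp] lemma xT_append (p q : L) : xT (p ++ q) = xT p + xT q := by simp [xT]
@[simp] lemma yT_append (p q : L) : yT (p ++ q) = yT p + yT q := by simp [yT]
@[simp] lemma xT_cons (st : ℕ × ℕ) (p : L) : xT (st :: p) = st.1 + xT p := by simp [xT]
@[simp] lemma yT_cons (st : ℕ × ℕ) (p : L) : yT (st :: p) = st.2 + yT p := by simp [yT]

lemma xPart_eq (p : L) (j : ℕ) : xPart p j = xT (p.take j) := rfl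
lemma yPart_eq (p : L) (j : ℕ) : yPart p j = yT (p.take j) := rfl
lemma xPart_len (p : L) : xPart p p.length = xT p := by simp [xPart_eq]
lemma yPart_len (p : L) : yPart p p.length = yT p := by simp [yPart_eq]

lemma xT_take_le (p : L) (j : ℕ) : xT (p.take j) ≤ xT p := by
  conv_rhs => rw [← List.take_append_drop j p]
  rw [xT_append]; exact Nat.le_add_right _ _
lemma yT_take_le (p : L) (j : ℕ) : yT (p.take j) ≤ yT p := by
  conv_rhs => rw [← List.take_append_drop j p]
  rw [yT_append]; exact Nat.le_add_right _ _

lemma take_take_of_le (p : L) {j k : ℕ} (h : j ≤ k) : (p.take k).take j = p.take j := by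
  rw [List.take_take, min_eq_left h]

def Steps (S : Set (ℕ × ℕ)) (p : L) : Prop := ∀ st ∈ p, st ∈ S

lemma Steps_append {S : Set (ℕ × ℕ)} {p q : L} :
    Steps S (p ++ q) ↔ Steps S p ∧ Steps S q := by
  constructor
  · intro h; exact ⟨fun st hst => h st (by simp [hst]), fun st hst => h st (by simp [hst])⟩
  · rintro ⟨h1, h2⟩ st hst; rcases List.mem_append.1 hst with h | h; exacts [h1 st h, h2 st h]

lemma Steps_take {S : Set (ℕ × ℕ)} {p : L} (h : Steps S p) (j : ℕ) : Steps S (p.take j) :=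
  fun st hst => h st (List.mem_of_mem_take hst)
lemma Steps_drop {S : Set (ℕ × ℕ)} {p : L} (h : Steps S p) (j : ℕ) : Steps S (p.drop j) :=
  fun st hst => h st (List.mem_of_mem_drop hst)

def Cat (p : L) : Prop := ∀ j, xT (p.take j) ≤ yT (p.take j)

lemma cat_iff (p : L) : Cat p ↔ IsCatalan p := by
  constructor
  · intro h j _; exact h j
  · intro h j
    rcases le_or_gt j p.length with hj | hj
    · exact h j hj
    · rw [List.take_of_length_le hj.le]
      simpa [xPart_eq, yPart_eq] using h p.length le_rfl

lemma Cat.le {p : L} (h : Cat p) : xT p ≤ yT p := by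
  simpa using h p.length

lemma Cat_take {p : L} (h : Cat p) (k : ℕ) : Cat (p.take k) := by
  intro j
  rw [List.take_take]
  exact h _

def DP (p : L) (k : ℕ) : Prop :=
  k ≠ 0 ∧ k ≤ p.length ∧ Cat (p.take k) ∧ xT (p.take k) = yT (p.take k)

def Prim (p : L) : Prop := ∀ k, ¬ DP p k

lemma prim_nil : Prim [] := by
  rintro k ⟨hk, hk2, -, -⟩
  simp at hk2; omega

/-- primitive Catalan path to `(a,a)` -/
def PC (S : Set (ℕ × ℕ)) (a : ℕ) (q : L) : Prop :=
  Steps S q ∧ Cat q ∧ xT q = a ∧ yT q = a ∧ q ≠ [] ∧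
    ∀ k, k ≠ 0 → k < q.length → xT (q.take k) < yT (q.take k)

lemma PC.steps {S : Set (ℕ × ℕ)} {a : ℕ} {q : L} (hq : PC S a q) : Steps S q := hq.1
lemma PC.xTot {S : Set (ℕ × ℕ)} {a : ℕ} {q : L} (hq : PC S a q) : xT q = a := hq.2.2.1
lemma PC.yTot {S : Set (ℕ × ℕ)} {a : ℕ} {q : L} (hq : PC S a q) : yT q = a := hq.2.2.2.1

lemma PC.dp {S : Set (ℕ × ℕ)} {a : ℕ} {q : L} (hq : PC S a q) (r : L) :
    DP (q ++ r) q.length := by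
  obtain ⟨hS, hc, hx, hy, hne, hstrict⟩ := hq
  refine ⟨by simpa using hne, by simp, ?_, ?_⟩
  · rw [List.take_left]; exact hc
  · rw [List.take_left, hx, hy]

lemma PC.not_dp_lt {S : Set (ℕ × ℕ)} {a : ℕ} {q : L} (hq : PC S a q) (r : L) {k : ℕ}
    (hk : k < q.length) : ¬ DP (q ++ r) k := by
  obtain ⟨hS, hc, hx, hy, hne, hstrict⟩ := hq
  rintro ⟨hk0, -, -, heq⟩
  have ht : (q ++ r).take k = q.take k := by
    rw [List.take_append, Nat.sub_eq_zero_of_le hk.le]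
    simp
  rw [ht] at heq
  exact absurd heq (Nat.ne_of_lt (hstrict k hk0 hk))

lemma PC_unique {S : Set (ℕ × ℕ)} {a a' : ℕ} {q r q' r' : L} (hq : PC S a q) (hq' : PC S a' q')
    (h : q ++ r = q' ++ r') : a = a' ∧ q = q' ∧ r = r' := by
  have hlen : q.length = q'.length := by
    by_contra hne
    rcases Nat.lt_or_ge q.length q'.length with hlt | hge
    · exact hq'.not_dp_lt r' hlt (h ▸ hq.dp r)
    · exact hq.not_dp_lt r (lt_of_le_of_ne hge (fun e => hne e.symm)) (h ▸ hq'.dp r')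
  obtain ⟨hqq, hrr⟩ := List.append_inj h hlen
  refine ⟨?_, hqq, hrr⟩
  rw [← hq.2.2.1, ← hq'.2.2.1, hqq]

lemma exists_PC_split {S : Set (ℕ × ℕ)} {p : L} (hS : Steps S p) (hnp : ¬ Prim p) :
    ∃ a q r, PC S a q ∧ Steps S r ∧ p = q ++ r ∧ a = yT q := by
  have hex : ∃ k, DP p k := by
    by_contra h; exact hnp (fun k hk => h ⟨k, hk⟩)
  set k₀ := Nat.find hex with hk₀
  obtain ⟨hk0, hkle, hcat, hdiag⟩ : DP p k₀ := Nat.find_spec hex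
  refine ⟨yT (p.take k₀), p.take k₀, p.drop k₀, ⟨Steps_take hS _, hcat, hdiag, rfl, ?_, ?_⟩,
    Steps_drop hS _, (List.take_append_drop k₀ p).symm, rfl⟩
  · intro hnil
    apply hk0
    have := congrArg List.length hnil
    simp [min_eq_left hkle] at this
    exact this
  · intro k hkne hklt
    have hklen : (p.take k₀).length = k₀ := by simp [min_eq_left hkle]
    rw [hklen] at hklt
    have hne : ¬ DP p k := Nat.find_min hex hklt
    rw [take_take_of_le p hklt.le]
    have hle : xT (p.take k) ≤ yT (p.take k) := by
      have := Cat_take hcat k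
      rw [take_take_of_le p hklt.le] at this
      exact this.le
    rcases lt_or_eq_of_le hle with h | h
    · exact h
    · exact absurd ⟨hkne, hklt.le.trans hkle, by
        have := Cat_take hcat k
        rwa [take_take_of_le p hklt.le] at this, h⟩ hne

lemma not_prim_of_PC {S : Set (ℕ × ℕ)} {a : ℕ} {q r : L} (hq : PC S a q) : ¬ Prim (q ++ r) :=
  fun h => h q.length (hq.dp r)

/- Finiteness -/

lemma length_le_sum {S : Set (ℕ × ℕ)} (h00 : (0, 0) ∉ S) :
    ∀ {p : L}, Steps S p → p.length ≤ xT p + yT p := by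
  intro p
  induction p with
  | nil => simp
  | cons st q ih =>
    intro h
    have hst : st ∈ S := h st (by simp)
    have h1 : 1 ≤ st.1 + st.2 := by
      rcases Nat.eq_zero_or_pos (st.1 + st.2) with h0 | h0
      · exfalso; apply h00
        have : st = (0, 0) := by
          have := Nat.eq_zero_of_add_eq_zero_right h0
          have := Nat.eq_zero_of_add_eq_zero_left h0
          ext <;> simp <;> omega
        rwa [this] at hst
      · exact h0
    have := ih (fun x hx => h x (by simp [hx]))
    simp only [List.length_cons, xT, yT, List.map_cons, List.sum_cons] at *
    omega

lemma finite_bounded (S : Set (ℕ × ℕ)) (h00 : (0, 0) ∉ S) (N : ℕ) :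
    {p : L | Steps S p ∧ xT p ≤ N ∧ yT p ≤ N}.Finite := by
  have hsub : {p : L | Steps S p ∧ xT p ≤ N ∧ yT p ≤ N} ⊆
      (fun l : List (Fin (N+1) × Fin (N+1)) => l.map (fun ab => ((ab.1 : ℕ), (ab.2 : ℕ)))) ''
        {l | l.length ≤ 2 * N} := by
    rintro p ⟨hS, hx, hy⟩
    have hmem : ∀ st ∈ p, st.1 ≤ N ∧ st.2 ≤ N := by
      intro st hst
      constructor
      · exact le_trans (List.single_le_sum (fun _ _ => Nat.zero_le _) _
          (List.mem_map_of_mem (f := Prod.fst) hst)) hx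
      · exact le_trans (List.single_le_sum (fun _ _ => Nat.zero_le _) _
          (List.mem_map_of_mem (f := Prod.snd) hst)) hy
    refine ⟨p.attach.map (fun st =>
      (⟨st.1.1, Nat.lt_succ_of_le (hmem st.1 st.2).1⟩,
       ⟨st.1.2, Nat.lt_succ_of_le (hmem st.1 st.2).2⟩)), ?_, ?_⟩
    · simp only [Set.mem_setOf_eq, List.length_map, List.length_attach]
      calc p.length ≤ xT p + yT p := length_le_sum h00 hS
        _ ≤ 2 * N := by omega
    · show List.map _ (List.map _ _) = _
      rw [List.map_map]
      have : ∀ st ∈ p.attach, ((fun ab : Fin (N+1) × Fin (N+1) => ((ab.1 : ℕ), (ab.2 : ℕ))) ∘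
          (fun st : {x // x ∈ p} => ((⟨st.1.1, Nat.lt_succ_of_le (hmem st.1 st.2).1⟩ : Fin (N+1)),
            (⟨st.1.2, Nat.lt_succ_of_le (hmem st.1 st.2).2⟩ : Fin (N+1))))) st = st.1 := by
        intro st _; rfl
      rw [List.map_congr_left this, List.attach_map_subtype_val]
  exact Set.Finite.subset (Set.Finite.image _ (List.finite_length_le _ _)) hsub

/- sets -/

def PCset (S : Set (ℕ × ℕ)) (a : ℕ) : Set L := {q | PC S a q}

lemma PCset_finite (S : Set (ℕ × ℕ)) (h00 : (0, 0) ∉ S) (a : ℕ) : (PCset S a).Finite := by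
  refine (finite_bounded S h00 a).subset ?_
  rintro q hq
  exact ⟨hq.steps, hq.xTot.le.trans le_rfl, hq.yTot.le⟩

lemma split_card (S : Set (ℕ × ℕ)) (h00 : (0, 0) ∉ S) (Φ : L → Prop)
    (hΦ : ∀ (a : ℕ) (q r : L), PC S a q → (Φ (q ++ r) ↔ Φ r))
    (hΦx : ∀ p : L, Φ p → xT p ≤ yT p) (n : ℕ) :
    ({p : L | Steps S p ∧ Φ p ∧ yT p = n ∧ ¬ Prim p}).ncard
      = ∑ a ∈ Finset.range (n + 1),
          (PCset S a).ncard * ({r : L | Steps S r ∧ Φ r ∧ yT r = n - a}).ncard := by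
  have hRfin : ∀ m : ℕ, ({r : L | Steps S r ∧ Φ r ∧ yT r = m}).Finite := fun m =>
    (finite_bounded S h00 m).subset (by rintro r ⟨h1, h2, h3⟩; exact ⟨h1, h3 ▸ hΦx r h2, h3.le⟩)
  have hAfin : ({p : L | Steps S p ∧ Φ p ∧ yT p = n ∧ ¬ Prim p}).Finite :=
    ((hRfin n).subset (by rintro p ⟨h1, h2, h3, h4⟩; exact ⟨h1, h2, h3⟩))
  have key : hAfin.toFinset = (Finset.range (n + 1)).biUnion (fun a =>
      (((PCset_finite S h00 a).toFinset ×ˢ (hRfin (n - a)).toFinset).image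
        (fun qr => qr.1 ++ qr.2))) := by
    ext p
    simp only [Set.Finite.mem_toFinset, Set.mem_setOf_eq, Finset.mem_biUnion, Finset.mem_range,
      Finset.mem_image, Finset.mem_product, Prod.exists]
    constructor
    · rintro ⟨hS, hphi, hyT, hnp⟩
      obtain ⟨a, q, r, hpc, hSr, hsplit, ha⟩ := exists_PC_split hS hnp
      have hyeq : yT q + yT r = n := by rw [← yT_append, ← hsplit, hyT]
      have haq : a = yT q := ha
      refine ⟨a, by omega, q, r, ⟨?_, ?_⟩, hsplit.symm⟩
      · simpa [PCset] using hpc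
      · refine ⟨hSr, (hΦ a q r hpc).1 (hsplit ▸ hphi), by omega⟩
    · rintro ⟨a, han, q, r, ⟨hq, hr⟩, rfl⟩
      simp only [Set.Finite.mem_toFinset, Set.mem_setOf_eq, PCset] at hq hr
      obtain ⟨hSr, hphir, hyr⟩ := hr
      refine ⟨Steps_append.2 ⟨hq.steps, hSr⟩, (hΦ a q r hq).2 hphir, ?_, not_prim_of_PC hq⟩
      rw [yT_append, hq.yTot]; omega
  have hcard := Set.ncard_eq_toFinset_card _ hAfin
  rw [hcard, key, Finset.card_biUnion]
  · refine Finset.sum_congr rfl (fun a _ => ?_)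
    rw [Finset.card_image_of_injOn, Finset.card_product,
      ← Set.ncard_eq_toFinset_card _ (PCset_finite S h00 a),
      ← Set.ncard_eq_toFinset_card _ (hRfin (n - a))]
    rintro ⟨q, r⟩ hqr ⟨q', r'⟩ hqr' heq
    simp only [Finset.mem_coe, Finset.mem_product, Set.Finite.mem_toFinset, Set.mem_setOf_eq,
      PCset] at hqr hqr'
    obtain ⟨-, h2, h3⟩ := PC_unique hqr.1 hqr'.1 heq
    exact Prod.ext h2 h3
  · intro a _ a' _ hne
    rw [Function.onFun, Finset.disjoint_left]
    rintro p hp hp'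
    simp only [Finset.mem_image, Finset.mem_product, Prod.exists] at hp hp'
    obtain ⟨q, r, ⟨hq, -⟩, rfl⟩ := hp
    obtain ⟨q', r', ⟨hq', -⟩, heq⟩ := hp'
    simp only [Set.Finite.mem_toFinset, Set.mem_setOf_eq, PCset] at hq hq'
    exact hne (PC_unique hq' hq heq).1.symm


lemma Steps_cons {S : Set (ℕ × ℕ)} {st : ℕ × ℕ} {p : L} :
    Steps S (st :: p) ↔ st ∈ S ∧ Steps S p := by
  constructor
  · intro h; exact ⟨h st (by simp), fun x hx => h x (by simp [hx])⟩
  · rintro ⟨h1, h2⟩ x hx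
    rcases List.mem_cons.1 hx with rfl | hx
    exacts [h1, h2 x hx]

lemma Steps_mem {S : Set (ℕ × ℕ)} {p : L} (h : Steps S p) {st : ℕ × ℕ} (hst : st ∈ p) :
    st ∈ S := h st hst

def Uset (S : Set (ℕ × ℕ)) (a : ℕ) : Set L :=
  {u | Steps S u ∧ (∀ k, k ≠ 0 → k ≤ u.length → xT (u.take k) < yT (u.take k)) ∧ yT u = a}
def E1res (S : Set (ℕ × ℕ)) (m : ℕ) : Set L := {r | Steps S r ∧ xT r < yT r ∧ yT r = m}
def Dset (S : Set (ℕ × ℕ)) (n : ℕ) : Set L := {p | Steps S p ∧ Prim p ∧ xT p = n ∧ yT p = n}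

lemma Uset_xLEy {S : Set (ℕ × ℕ)} {a : ℕ} {u : L} (hu : u ∈ Uset S a) : xT u ≤ yT u := by
  obtain ⟨-, hstrict, -⟩ := hu
  rcases eq_or_ne u [] with rfl | hne
  · simp
  · have := hstrict u.length (fun e => hne (List.length_eq_zero_iff.1 e)) le_rfl
    rw [List.take_length] at this
    exact this.le

lemma take_app_le {u v : L} {k : ℕ} (hk : k ≤ u.length) : (u ++ v).take k = u.take k := by
  rw [List.take_append, Nat.sub_eq_zero_of_le hk]
  simp

lemma take_app_succ (u : L) (st : ℕ × ℕ) (v : L) :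
    (u ++ st :: v).take (u.length + 1) = u ++ [st] := by
  rw [List.take_append]
  simp [List.take_of_length_le]

/-- basic inequalities for a composite `u ++ (h,0) :: v`. -/
lemma cross_ineq {S : Set (ℕ × ℕ)} {a n : ℕ} {u v : L} (ha : a ≤ n)
    (hu : u ∈ Uset S a) (hv : v ∈ E1res S (n - a)) :
    xT u ≤ a ∧ xT v < n - a ∧ xT u + xT v < n ∧
      a < xT u + (n - xT u - xT v) ∧ 1 ≤ n - xT u - xT v := by
  have h1 : xT u ≤ a := hu.2.2 ▸ Uset_xLEy hu
  have h2 : xT v < n - a := by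
    have := hv.2.1; have := hv.2.2; omega
  refine ⟨h1, h2, by omega, by omega, by omega⟩

/-- no crossing within `u`, in the composite. -/
lemma cross_profile_le {S : Set (ℕ × ℕ)} {a : ℕ} {u : L} (hu : u ∈ Uset S a)
    (w : L) {k : ℕ} (hk : k ≤ u.length) : xT ((u ++ w).take k) ≤ yT ((u ++ w).take k) := by
  rw [take_app_le hk]
  rcases Nat.eq_zero_or_pos k with rfl | hk0
  · simp
  · exact (hu.2.1 k (by omega) hk).le

/-- crossing right after `u`, in the composite. -/
lemma cross_profile_gt {S : Set (ℕ × ℕ)} {a n : ℕ} {u v : L} (ha : a ≤ n)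
    (hu : u ∈ Uset S a) (hv : v ∈ E1res S (n - a)) :
    yT ((u ++ (n - xT u - xT v, 0) :: v).take (u.length + 1))
      < xT ((u ++ (n - xT u - xT v, 0) :: v).take (u.length + 1)) := by
  rw [take_app_succ]
  obtain ⟨-, -, -, h4, -⟩ := cross_ineq ha hu hv
  simp only [xT_append, yT_append, xT_cons, yT_cons, xT_nil, yT_nil]
  have := hu.2.2
  simp
  omega

lemma cross_comp {S : Set (ℕ × ℕ)} (hhoriz : ∀ a : ℕ, 1 ≤ a → (a, 0) ∈ S)
    {a n : ℕ} {u v : L} (ha : a ≤ n) (hu : u ∈ Uset S a) (hv : v ∈ E1res S (n - a)) :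
    (u ++ (n - xT u - xT v, 0) :: v) ∈ Dset S n := by
  obtain ⟨h1, h2, h3, h4, h5⟩ := cross_ineq ha hu hv
  have hau : yT u = a := hu.2.2
  have hyv : yT v = n - a := hv.2.2
  refine ⟨?_, ?_, ?_, ?_⟩
  · exact Steps_append.2 ⟨hu.1, Steps_cons.2 ⟨hhoriz _ h5, hv.1⟩⟩
  · rintro k ⟨hk0, hklen, hcat, hdiag⟩
    rcases le_or_gt k u.length with hk | hk
    · rw [take_app_le hk] at hdiag
      exact absurd hdiag (Nat.ne_of_lt (hu.2.1 k hk0 hk))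
    · have hcat2 := hcat (u.length + 1)
      rw [take_take_of_le _ hk] at hcat2
      exact absurd hcat2 (not_le.2 (cross_profile_gt ha hu hv))
  · simp; omega
  · simp; omega

lemma cross_unique {S : Set (ℕ × ℕ)} {a a' n : ℕ} {u v u' v' : L}
    (ha : a ≤ n) (ha' : a' ≤ n) (hu : u ∈ Uset S a) (hv : v ∈ E1res S (n - a))
    (hu' : u' ∈ Uset S a') (hv' : v' ∈ E1res S (n - a'))
    (h : u ++ (n - xT u - xT v, 0) :: v = u' ++ (n - xT u' - xT v', 0) :: v') :
    a = a' ∧ u = u' ∧ v = v' := by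
  have hlen : u.length = u'.length := by
    by_contra hne
    rcases Nat.lt_or_ge u.length u'.length with hlt | hge
    · have h1 := cross_profile_gt ha hu hv
      rw [h] at h1
      exact absurd (cross_profile_le hu' _ (by omega)) (not_le.2 h1)
    · have h1 := cross_profile_gt ha' hu' hv'
      rw [← h] at h1
      exact absurd (cross_profile_le hu ((n - xT u - xT v, 0) :: v)
        (show u'.length + 1 ≤ u.length by omega)) (not_le.2 h1)
  obtain ⟨huu, hvv⟩ := List.append_inj h hlen
  have hv2 : v = v' := (List.cons_eq_cons.1 hvv).2
  refine ⟨?_, huu, hv2⟩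
  rw [← hu.2.2, ← hu'.2.2, huu]

lemma cross_decomp {S : Set (ℕ × ℕ)}
    (hslope : ∀ a b : ℕ, (a, b) ∈ S → 0 < b → a ≤ b)
    {n : ℕ} (hn : 1 ≤ n) {p : L} (hp : p ∈ Dset S n) :
    ∃ a, a ≤ n ∧ ∃ u v, u ∈ Uset S a ∧ v ∈ E1res S (n - a) ∧
      p = u ++ (n - xT u - xT v, 0) :: v := by
  obtain ⟨hS, hprim, hx, hy⟩ := hp
  have hex : ∃ k, yT (p.take k) < xT (p.take k) := by
    by_contra hc
    push_neg at hc
    have hlen0 : p.length ≠ 0 := by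
      intro e
      rw [List.length_eq_zero_iff.1 e] at hy
      simp at hy; omega
    exact hprim p.length ⟨hlen0, le_rfl, fun j => by
      rw [List.take_take]; exact hc _, by rw [List.take_length, hx, hy]⟩
  set i := Nat.find hex with hidef
  have hi : yT (p.take i) < xT (p.take i) := Nat.find_spec hex
  have hi0 : i ≠ 0 := by
    intro e; rw [e] at hi; simp at hi
  have hile : i ≤ p.length := by
    by_contra hc
    rw [List.take_of_length_le (by omega)] at hi
    omega
  have hstrict : ∀ k, k ≠ 0 → k < i → xT (p.take k) < yT (p.take k) := by
    intro k hk0 hki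
    have hle : xT (p.take k) ≤ yT (p.take k) := not_lt.1 (Nat.find_min hex hki)
    rcases lt_or_eq_of_le hle with h | h
    · exact h
    · exact absurd ⟨hk0, by omega, fun j => by
        rw [List.take_take]
        exact not_lt.1 (Nat.find_min hex (lt_of_le_of_lt (min_le_right j k) hki)), h⟩ (hprim k)
  have hi1len : i - 1 < p.length := by omega
  set st := p.get ⟨i - 1, hi1len⟩ with hstdef
  have htake : p.take i = p.take (i - 1) ++ [st] := by
    have := List.take_concat_get hi1len
    rw [show i - 1 + 1 = i by omega, List.concat_eq_append] at this
    exact this.symm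
  have hsplit : p = p.take (i - 1) ++ st :: p.drop i := by
    conv_lhs => rw [← List.take_append_drop (i - 1) p]
    congr 1
    rw [List.drop_eq_getElem_cons hi1len, show i - 1 + 1 = i by omega]
    rfl
  have hno : xT (p.take (i - 1)) ≤ yT (p.take (i - 1)) := by
    rcases Nat.eq_zero_or_pos (i - 1) with e | hpos
    · rw [e]; simp
    · exact (hstrict (i - 1) (by omega) (by omega)).le
  have hxi : xT (p.take i) = xT (p.take (i - 1)) + st.1 := by rw [htake]; simp
  have hyi : yT (p.take i) = yT (p.take (i - 1)) + st.2 := by rw [htake]; simp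
  have hst2 : st.2 = 0 := by
    by_contra h2
    have hstS : st ∈ S := Steps_mem hS (List.get_mem p ⟨i - 1, hi1len⟩)
    have := hslope st.1 st.2 hstS (Nat.pos_of_ne_zero h2)
    omega
  have hxs : xT p = xT (p.take (i - 1)) + st.1 + xT (p.drop i) := by
    conv_lhs => rw [hsplit]
    simp only [xT_append, xT_cons]
    omega
  have hys : yT p = yT (p.take (i - 1)) + yT (p.drop i) := by
    conv_lhs => rw [hsplit]
    simp only [yT_append, yT_cons]
    omega
  refine ⟨yT (p.take (i - 1)), yT_take_le p (i - 1) |>.trans hy.le, p.take (i - 1), p.drop i,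
    ⟨Steps_take hS _, ?_, rfl⟩, ⟨Steps_drop hS _, ?_, ?_⟩, ?_⟩
  · intro k hk0 hklen
    have hkle : k ≤ i - 1 := le_trans hklen (by simp)
    rw [take_take_of_le p hkle]
    exact hstrict k hk0 (by omega)
  · omega
  · omega
  · have hst : st = (n - xT (p.take (i - 1)) - xT (p.drop i), 0) :=
      Prod.ext (by omega) hst2
    conv_lhs => rw [hsplit]
    rw [hst]

lemma Uset_finite (S : Set (ℕ × ℕ)) (h00 : (0, 0) ∉ S) (a : ℕ) : (Uset S a).Finite :=
  (finite_bounded S h00 a).subset (fun u hu => ⟨hu.1, hu.2.2 ▸ Uset_xLEy hu, hu.2.2.le⟩)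

lemma E1res_finite (S : Set (ℕ × ℕ)) (h00 : (0, 0) ∉ S) (m : ℕ) : (E1res S m).Finite :=
  (finite_bounded S h00 m).subset (fun r hr => ⟨hr.1, hr.2.2 ▸ hr.2.1.le, hr.2.2.le⟩)

lemma Dset_finite (S : Set (ℕ × ℕ)) (h00 : (0, 0) ∉ S) (n : ℕ) : (Dset S n).Finite :=
  (finite_bounded S h00 n).subset (fun p hp => ⟨hp.1, hp.2.2.1.le, hp.2.2.2.le⟩)

lemma cross_card (S : Set (ℕ × ℕ)) (h00 : (0, 0) ∉ S)
    (hhoriz : ∀ a : ℕ, 1 ≤ a → (a, 0) ∈ S)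
    (hslope : ∀ a b : ℕ, (a, b) ∈ S → 0 < b → a ≤ b)
    {n : ℕ} (hn : 1 ≤ n) :
    (Dset S n).ncard
      = ∑ a ∈ Finset.range (n + 1), (Uset S a).ncard * (E1res S (n - a)).ncard := by
  have key : (Dset_finite S h00 n).toFinset = (Finset.range (n + 1)).biUnion (fun a =>
      (((Uset_finite S h00 a).toFinset ×ˢ (E1res_finite S h00 (n - a)).toFinset).image
        (fun uv : L × L => uv.1 ++ (n - xT uv.1 - xT uv.2, 0) :: uv.2))) := by
    ext p
    simp only [Set.Finite.mem_toFinset, Finset.mem_biUnion, Finset.mem_range,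
      Finset.mem_image, Finset.mem_product, Prod.exists]
    constructor
    · intro hp
      obtain ⟨a, han, u, v, hu, hv, hform⟩ := cross_decomp hslope hn hp
      exact ⟨a, by omega, u, v, ⟨hu, hv⟩, hform.symm⟩
    · rintro ⟨a, han, u, v, ⟨hu, hv⟩, rfl⟩
      exact cross_comp hhoriz (by omega) hu hv
  rw [Set.ncard_eq_toFinset_card _ (Dset_finite S h00 n), key, Finset.card_biUnion]
  · refine Finset.sum_congr rfl (fun a ha => ?_)
    have han : a ≤ n := by
      have := Finset.mem_range.1 ha
      omega
    rw [Finset.card_image_of_injOn, Finset.card_product,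
      ← Set.ncard_eq_toFinset_card _ (Uset_finite S h00 a),
      ← Set.ncard_eq_toFinset_card _ (E1res_finite S h00 (n - a))]
    rintro ⟨u, v⟩ huv ⟨u', v'⟩ huv' heq
    simp only [Finset.mem_coe, Finset.mem_product, Set.Finite.mem_toFinset] at huv huv'
    obtain ⟨-, h2, h3⟩ := cross_unique han han huv.1 huv.2 huv'.1 huv'.2 heq
    exact Prod.ext h2 h3
  · intro a ha a' ha' hne
    rw [Function.onFun, Finset.disjoint_left]
    rintro p hp hp'
    simp only [Finset.mem_image, Finset.mem_product, Prod.exists] at hp hp'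
    obtain ⟨u, v, ⟨hu, hv⟩, rfl⟩ := hp
    obtain ⟨u', v', ⟨hu', hv'⟩, heq⟩ := hp'
    simp only [Set.Finite.mem_toFinset] at hu hv hu' hv'
    simp only [Finset.mem_coe, Finset.mem_range] at ha ha'
    exact hne ((cross_unique (by omega) (by omega) hu' hv' hu hv heq).1.symm)



/- ## small sets and misc lemmas -/

lemma nil_of_bounds {S : Set (ℕ × ℕ)} (h00 : (0, 0) ∉ S) {p : L} (hS : Steps S p)
    (hx : xT p = 0) (hy : yT p = 0) : p = [] := by
  have := length_le_sum h00 hS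
  rw [hx, hy] at this
  exact List.length_eq_zero_iff.1 (by omega)

lemma cat_nil : Cat [] := by intro j; simp

lemma Dset_zero (S : Set (ℕ × ℕ)) (h00 : (0, 0) ∉ S) : Dset S 0 = {[]} := by
  ext p
  constructor
  · rintro ⟨hS, -, hx, hy⟩
    exact nil_of_bounds h00 hS hx hy
  · rintro rfl
    exact ⟨fun st hst => absurd hst List.not_mem_nil, prim_nil, rfl, rfl⟩

lemma Uset_zero (S : Set (ℕ × ℕ)) : Uset S 0 = {[]} := by
  ext u
  constructor
  · rintro ⟨hS, hstrict, hy⟩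
    rcases eq_or_ne u [] with rfl | hne
    · rfl
    · have := hstrict u.length (fun e => hne (List.length_eq_zero_iff.1 e)) le_rfl
      rw [List.take_length] at this
      omega
  · rintro rfl
    exact ⟨fun st hst => absurd hst List.not_mem_nil, fun k hk0 hk => by simp at hk; omega, rfl⟩

lemma PCset_zero (S : Set (ℕ × ℕ)) (h00 : (0, 0) ∉ S) : PCset S 0 = ∅ := by
  ext q
  simp only [Set.mem_empty_iff_false, iff_false]
  rintro ⟨hS, hcat, hx, hy, hne, -⟩
  exact hne (nil_of_bounds h00 hS hx hy)

lemma E1res_zero (S : Set (ℕ × ℕ)) : E1res S 0 = ∅ := by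
  ext r
  simp only [Set.mem_empty_iff_false, iff_false]
  rintro ⟨-, h1, h2⟩
  omega

def Psets (S : Set (ℕ × ℕ)) (n : ℕ) : Set L :=
  {p | Steps S p ∧ (Cat p ∧ xT p = yT p) ∧ yT p = n}

lemma Psets_finite (S : Set (ℕ × ℕ)) (h00 : (0, 0) ∉ S) (n : ℕ) : (Psets S n).Finite :=
  (finite_bounded S h00 n).subset (by rintro p ⟨h1, ⟨-, h2⟩, h3⟩; exact ⟨h1, by omega, h3.le⟩)

lemma Psets_zero (S : Set (ℕ × ℕ)) (h00 : (0, 0) ∉ S) : Psets S 0 = {[]} := by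
  ext p
  constructor
  · rintro ⟨hS, ⟨-, h2⟩, h3⟩
    exact nil_of_bounds h00 hS (by omega) h3
  · rintro rfl
    exact ⟨fun st hst => absurd hst List.not_mem_nil, ⟨cat_nil, rfl⟩, rfl⟩

def E0set (S : Set (ℕ × ℕ)) (n : ℕ) : Set L := {p | Steps S p ∧ xT p ≤ yT p ∧ yT p = n}
def Fset (S : Set (ℕ × ℕ)) (n : ℕ) : Set L :=
  {p | Steps S p ∧ Prim p ∧ xT p ≤ yT p ∧ yT p = n}
def Gset (S : Set (ℕ × ℕ)) (n : ℕ) : Set L :=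
  {p | Steps S p ∧ Prim p ∧ xT p < yT p ∧ yT p = n}

lemma E0set_finite (S : Set (ℕ × ℕ)) (h00 : (0, 0) ∉ S) (n : ℕ) : (E0set S n).Finite :=
  (finite_bounded S h00 n).subset (by rintro p ⟨h1, h2, h3⟩; exact ⟨h1, by omega, h3.le⟩)
lemma Fset_finite (S : Set (ℕ × ℕ)) (h00 : (0, 0) ∉ S) (n : ℕ) : (Fset S n).Finite :=
  (finite_bounded S h00 n).subset (by rintro p ⟨h1, -, h2, h3⟩; exact ⟨h1, by omega, h3.le⟩)

/- ## partition lemma -/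

lemma ncard_split (A : Set L) (hA : A.Finite) (P : L → Prop) :
    A.ncard = {p | p ∈ A ∧ P p}.ncard + {p | p ∈ A ∧ ¬ P p}.ncard := by
  rw [← Set.ncard_union_eq (by
      rw [Set.disjoint_left]
      rintro p ⟨-, h⟩ ⟨-, h'⟩
      exact h' h)
    (hA.subset (fun p hp => hp.1)) (hA.subset (fun p hp => hp.1))]
  congr 1
  ext p
  constructor
  · intro hp
    by_cases h : P p
    · exact Or.inl ⟨hp, h⟩
    · exact Or.inr ⟨hp, h⟩
  · rintro (⟨hp, -⟩ | ⟨hp, -⟩) <;> exact hp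

/- ## cardinality of PCset -/

lemma PC_card (S : Set (ℕ × ℕ)) (h00 : (0, 0) ∉ S)
    (hhoriz : ∀ a : ℕ, 1 ≤ a → (a, 0) ∈ S)
    (hslope : ∀ a b : ℕ, (a, b) ∈ S → 0 < b → a ≤ b)
    {a : ℕ} (ha : 1 ≤ a) :
    (PCset S a).ncard = (if (a, a) ∈ S then 1 else 0) + (Uset S a).ncard := by
  have h1 : {q | q ∈ PCset S a ∧ q.length = 1}
      = (if (a, a) ∈ S then ({[(a, a)]} : Set L) else ∅) := by
    ext q
    constructor
    · rintro ⟨⟨hS, hcat, hx, hy, hne, -⟩, hlen⟩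
      obtain ⟨st, rfl⟩ := List.length_eq_one_iff.1 hlen
      have hst1 : st.1 = a := by simpa using hx
      have hst2 : st.2 = a := by simpa using hy
      have hstaa : st = (a, a) := Prod.ext hst1 hst2
      rw [if_pos (hstaa ▸ hS st (by simp))]
      simp [hstaa]
    · intro hq
      split_ifs at hq with hmem
      · rcases hq with rfl
        refine ⟨⟨?_, ?_, by simp, by simp, by simp, ?_⟩, by simp⟩
        · exact fun st hst => by
            rcases List.mem_singleton.1 hst with rfl
            exact hmem
        · intro j
          cases j with
          | zero => simp
          | succ j => simp
        · intro k hk0 hk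
          simp at hk
          omega
      · exact absurd hq (Set.notMem_empty q)
  have hinj : Set.InjOn (fun u : L => u ++ [(a - xT u, 0)]) (Uset S a) := by
    rintro u hu u' hu' heq
    have hlen : u.length = u'.length := by
      have := congrArg List.length heq
      simpa using this
    exact (List.append_inj heq hlen).1
  have h2 : {q | q ∈ PCset S a ∧ ¬ q.length = 1}
      = (fun u : L => u ++ [(a - xT u, 0)]) '' (Uset S a) := by
    ext q
    constructor
    · rintro ⟨⟨hS, hcat, hx, hy, hne, hstrict⟩, hlen1⟩
      have hlen : 2 ≤ q.length := by
        rcases eq_or_ne q [] with rfl | hq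
        · exact absurd rfl hne
        · have : q.length ≠ 0 := fun e => hq (List.length_eq_zero_iff.1 e)
          omega
      have hmlt : q.length - 1 < q.length := by omega
      set st := q.get ⟨q.length - 1, hmlt⟩ with hstdef
      have htake : q = q.take (q.length - 1) ++ [st] := by
        have := List.take_concat_get hmlt
        rw [show q.length - 1 + 1 = q.length by omega, List.take_length,
          List.concat_eq_append] at this
        exact this.symm
      have hxq : xT q = xT (q.take (q.length - 1)) + st.1 := by
        conv_lhs => rw [htake]
        simp
      have hyq : yT q = yT (q.take (q.length - 1)) + st.2 := by
        conv_lhs => rw [htake]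
        simp
      have hstrictm : xT (q.take (q.length - 1)) < yT (q.take (q.length - 1)) :=
        hstrict (q.length - 1) (by omega) hmlt
      have hst2 : st.2 = 0 := by
        by_contra h2
        have := hslope st.1 st.2 (hS st (List.get_mem q _)) (Nat.pos_of_ne_zero h2)
        omega
      refine ⟨q.take (q.length - 1), ⟨Steps_take hS _, ?_, by omega⟩, ?_⟩
      · intro k hk0 hk
        rw [List.length_take] at hk
        have hkle : k ≤ q.length - 1 := le_trans hk (min_le_left _ _)
        rw [take_take_of_le q hkle]
        exact hstrict k hk0 (by omega)
      · have hst : st = (a - xT (q.take (q.length - 1)), 0) := Prod.ext (by omega) hst2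
        show q.take (q.length - 1) ++ [(a - xT (q.take (q.length - 1)), 0)] = q
        rw [← hst]
        exact htake.symm
    · rintro ⟨u, hu, rfl⟩
      obtain ⟨hS, hstrict, hy⟩ := hu
      have hune : u ≠ [] := by
        rintro rfl
        simp at hy
        omega
      have hxu : xT u < a := by
        have := hstrict u.length (fun e => hune (List.length_eq_zero_iff.1 e)) le_rfl
        rw [List.take_length] at this
        omega
      have hstep : 1 ≤ a - xT u := by omega
      refine ⟨⟨?_, ?_, by simp; omega, by simp; omega, by simp, ?_⟩, by simp [hune]⟩
      · exact Steps_append.2 ⟨hS, Steps_cons.2 ⟨hhoriz _ hstep, fun st hst =>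
          absurd hst List.not_mem_nil⟩⟩
      · intro j
        rcases le_or_gt j u.length with hj | hj
        · rw [take_app_le hj]
          rcases Nat.eq_zero_or_pos j with rfl | hj0
          · simp
          · exact (hstrict j (by omega) hj).le
        · rw [List.take_of_length_le (by simp; omega)]
          simp
          omega
      · intro k hk0 hk
        simp at hk
        have hkle : k ≤ u.length := by omega
        rw [take_app_le hkle]
        exact hstrict k hk0 hkle
  rw [ncard_split _ (PCset_finite S h00 a) (fun q => q.length = 1), h1, h2,
    Set.ncard_image_of_injOn hinj]
  congr 1
  split_ifs <;> simp

/- ## fibering over the endpoint -/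

lemma IsPath_iff (S : Set (ℕ × ℕ)) (j n : ℕ) (p : L) :
    IsPath S j n p ↔ Steps S p ∧ xT p = j ∧ yT p = n := by
  unfold IsPath
  rw [xPart_len, yPart_len]
  exact Iff.rfl

lemma IsPath_finite (S : Set (ℕ × ℕ)) (h00 : (0, 0) ∉ S) (j n : ℕ) :
    {p : L | IsPath S j n p}.Finite :=
  (finite_bounded S h00 (j + n)).subset (by
    rintro p hp
    rw [Set.mem_setOf_eq, IsPath_iff] at hp
    exact ⟨hp.1, by omega, by omega⟩)

lemma E0_fiber (S : Set (ℕ × ℕ)) (h00 : (0, 0) ∉ S) (n : ℕ) :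
    (E0set S n).ncard = ∑ j ∈ Finset.range (n + 1), aCount S j n := by
  have key : (E0set_finite S h00 n).toFinset = (Finset.range (n + 1)).biUnion
      (fun j => (IsPath_finite S h00 j n).toFinset) := by
    ext p
    simp only [Set.Finite.mem_toFinset, Finset.mem_biUnion, Finset.mem_range, Set.mem_setOf_eq,
      IsPath_iff]
    constructor
    · rintro ⟨h1, h2, h3⟩
      exact ⟨xT p, by omega, h1, rfl, h3⟩
    · rintro ⟨j, hj, h1, h2, h3⟩
      exact ⟨h1, by omega, h3⟩
  rw [Set.ncard_eq_toFinset_card _ (E0set_finite S h00 n), key, Finset.card_biUnion]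
  · exact Finset.sum_congr rfl (fun j _ => by
      rw [aCount, Set.ncard_eq_toFinset_card _ (IsPath_finite S h00 j n)])
  · intro j _ j' _ hne
    rw [Function.onFun, Finset.disjoint_left]
    rintro p hp hp'
    simp only [Set.Finite.mem_toFinset, Set.mem_setOf_eq, IsPath_iff] at hp hp'
    exact hne (hp.2.1 ▸ hp'.2.1)

lemma E1_fiber (S : Set (ℕ × ℕ)) (h00 : (0, 0) ∉ S) (n : ℕ) :
    (E1res S n).ncard = ∑ j ∈ Finset.range n, aCount S j n := by
  have key : (E1res_finite S h00 n).toFinset = (Finset.range n).biUnion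
      (fun j => (IsPath_finite S h00 j n).toFinset) := by
    ext p
    simp only [Set.Finite.mem_toFinset, Finset.mem_biUnion, Finset.mem_range, Set.mem_setOf_eq,
      IsPath_iff]
    constructor
    · rintro ⟨h1, h2, h3⟩
      exact ⟨xT p, by omega, h1, rfl, h3⟩
    · rintro ⟨j, hj, h1, h2, h3⟩
      exact ⟨h1, by omega, h3⟩
  rw [Set.ncard_eq_toFinset_card _ (E1res_finite S h00 n), key, Finset.card_biUnion]
  · exact Finset.sum_congr rfl (fun j _ => by
      rw [aCount, Set.ncard_eq_toFinset_card _ (IsPath_finite S h00 j n)])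
  · intro j _ j' _ hne
    rw [Function.onFun, Finset.disjoint_left]
    rintro p hp hp'
    simp only [Set.Finite.mem_toFinset, Set.mem_setOf_eq, IsPath_iff] at hp hp'
    exact hne (hp.2.1 ▸ hp'.2.1)

/- ## instantiations of the splitting lemma -/

lemma N1 (S : Set (ℕ × ℕ)) (h00 : (0, 0) ∉ S) (n : ℕ) :
    (E0set S n).ncard = (Fset S n).ncard
      + ∑ a ∈ Finset.range (n + 1), (PCset S a).ncard * (E0set S (n - a)).ncard := by
  have hsplit := split_card S h00 (fun p => xT p ≤ yT p)
    (fun a q r hq => by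
      simp only [xT_append, yT_append, hq.xTot, hq.yTot]
      omega)
    (fun p hp => hp) n
  have hpart := ncard_split (E0set S n) (E0set_finite S h00 n) Prim
  have e1 : {p | p ∈ E0set S n ∧ Prim p} = Fset S n := by
    ext p; unfold E0set Fset; constructor
    · rintro ⟨⟨a1, a2, a3⟩, a4⟩; exact ⟨a1, a4, a2, a3⟩
    · rintro ⟨a1, a4, a2, a3⟩; exact ⟨⟨a1, a2, a3⟩, a4⟩
  have e2 : {p | p ∈ E0set S n ∧ ¬ Prim p}
      = {p : L | Steps S p ∧ xT p ≤ yT p ∧ yT p = n ∧ ¬ Prim p} := by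
    ext p; unfold E0set; constructor
    · rintro ⟨⟨a1, a2, a3⟩, a4⟩; exact ⟨a1, a2, a3, a4⟩
    · rintro ⟨a1, a2, a3, a4⟩; exact ⟨⟨a1, a2, a3⟩, a4⟩
  rw [hpart, e1, e2, hsplit]
  exact congrArg _ (Finset.sum_congr rfl (fun a _ => rfl))

lemma N2 (S : Set (ℕ × ℕ)) (h00 : (0, 0) ∉ S) (n : ℕ) :
    (E1res S n).ncard = (Gset S n).ncard
      + ∑ a ∈ Finset.range (n + 1), (PCset S a).ncard * (E1res S (n - a)).ncard := by
  have hsplit := split_card S h00 (fun p => xT p < yT p)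
    (fun a q r hq => by
      simp only [xT_append, yT_append, hq.xTot, hq.yTot]
      omega)
    (fun p hp => hp.le) n
  have hpart := ncard_split (E1res S n) (E1res_finite S h00 n) Prim
  have e1 : {p | p ∈ E1res S n ∧ Prim p} = Gset S n := by
    ext p; unfold E1res Gset; constructor
    · rintro ⟨⟨a1, a2, a3⟩, a4⟩; exact ⟨a1, a4, a2, a3⟩
    · rintro ⟨a1, a4, a2, a3⟩; exact ⟨⟨a1, a2, a3⟩, a4⟩
  have e2 : {p | p ∈ E1res S n ∧ ¬ Prim p}
      = {p : L | Steps S p ∧ xT p < yT p ∧ yT p = n ∧ ¬ Prim p} := by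
    ext p; unfold E1res; constructor
    · rintro ⟨⟨a1, a2, a3⟩, a4⟩; exact ⟨a1, a2, a3, a4⟩
    · rintro ⟨a1, a2, a3, a4⟩; exact ⟨⟨a1, a2, a3⟩, a4⟩
  rw [hpart, e1, e2, hsplit]
  exact congrArg _ (Finset.sum_congr rfl (fun a _ => rfl))

lemma cat_append_iff {q r : L} (hq : Cat q) (hdiag : xT q = yT q) : Cat (q ++ r) ↔ Cat r := by
  constructor
  · intro h j
    have := h (q.length + j)
    rw [List.take_append, List.take_of_length_le (by omega),
      show q.length + j - q.length = j by omega, xT_append, yT_append] at this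
    omega
  · intro h j
    rw [List.take_append, xT_append, yT_append]
    rcases le_or_gt j q.length with hj | hj
    · rw [Nat.sub_eq_zero_of_le hj]
      simpa using hq j
    · rw [List.take_of_length_le hj.le]
      have := h (j - q.length)
      omega

lemma N3 (S : Set (ℕ × ℕ)) (h00 : (0, 0) ∉ S) {n : ℕ} (hn : 1 ≤ n) :
    (Psets S n).ncard
      = ∑ a ∈ Finset.range (n + 1), (PCset S a).ncard * (Psets S (n - a)).ncard := by
  have hsplit := split_card S h00 (fun p => Cat p ∧ xT p = yT p)
    (fun a q r hq => by
      constructor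
      · rintro ⟨h1, h2⟩
        refine ⟨(cat_append_iff hq.2.1 (by rw [hq.xTot, hq.yTot])).1 h1, ?_⟩
        rw [xT_append, yT_append, hq.xTot, hq.yTot] at h2
        omega
      · rintro ⟨h1, h2⟩
        refine ⟨(cat_append_iff hq.2.1 (by rw [hq.xTot, hq.yTot])).2 h1, ?_⟩
        rw [xT_append, yT_append, hq.xTot, hq.yTot]
        omega)
    (fun p hp => hp.2.le) n
  have e2 : Psets S n = {p : L | Steps S p ∧ (Cat p ∧ xT p = yT p) ∧ yT p = n ∧ ¬ Prim p} := by
    ext p; unfold Psets; constructor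
    · rintro ⟨a1, ⟨a2, a3⟩, a4⟩
      refine ⟨a1, ⟨a2, a3⟩, a4, fun hpr => ?_⟩
      refine hpr p.length ⟨?_, le_rfl, by rw [List.take_length]; exact a2, by
        rw [List.take_length]; exact a3⟩
      intro e
      rw [List.length_eq_zero_iff.1 e] at a4
      simp at a4
      omega
    · rintro ⟨a1, ⟨a2, a3⟩, a4, -⟩; exact ⟨a1, ⟨a2, a3⟩, a4⟩
  rw [e2, hsplit]
  exact Finset.sum_congr rfl (fun a _ => rfl)

lemma N6 (S : Set (ℕ × ℕ)) (h00 : (0, 0) ∉ S) (n : ℕ) :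
    (Fset S n).ncard = (Gset S n).ncard + (Dset S n).ncard := by
  have hpart := ncard_split (Fset S n) (Fset_finite S h00 n) (fun p => xT p < yT p)
  have e1 : {p | p ∈ Fset S n ∧ xT p < yT p} = Gset S n := by
    ext p; unfold Fset Gset; constructor
    · rintro ⟨⟨a1, a2, a3, a4⟩, a5⟩; exact ⟨a1, a2, a5, a4⟩
    · rintro ⟨a1, a2, a5, a4⟩; exact ⟨⟨a1, a2, a5.le, a4⟩, a5⟩
  have e2 : {p | p ∈ Fset S n ∧ ¬ xT p < yT p} = Dset S n := by
    ext p; unfold Fset Dset; constructor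
    · rintro ⟨⟨a1, a2, a3, a4⟩, a5⟩; exact ⟨a1, a2, by omega, a4⟩
    · rintro ⟨a1, a2, a3, a4⟩; exact ⟨⟨a1, a2, by omega, a4⟩, by omega⟩
  rw [hpart, e1, e2]

lemma pCat_eq (S : Set (ℕ × ℕ)) (n : ℕ) : pCatalan S n = (Psets S n).ncard := by
  unfold pCatalan Psets
  congr 1
  ext p
  rw [Set.mem_setOf_eq, Set.mem_setOf_eq, IsPath_iff, ← cat_iff]
  constructor
  · rintro ⟨⟨a1, a2, a3⟩, a4⟩; exact ⟨a1, ⟨a4, by omega⟩, a3⟩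
  · rintro ⟨a1, ⟨a4, a2⟩, a3⟩; exact ⟨⟨a1, by omega, a3⟩, a4⟩

end StmtAux

open StmtAux in
open Classical in
theorem stmt2 (S : Set (ℕ × ℕ)) (h00 : (0, 0) ∉ S)
    (hhoriz : ∀ a : ℕ, 1 ≤ a → (a, 0) ∈ S)
    (hslope : ∀ a b : ℕ, (a, b) ∈ S → 0 < b → a ≤ b)
    (P T E0 E1 : PowerSeries ℚ)
    (hP : P = PowerSeries.mk fun n => (pCatalan S n : ℚ))
    (hT : T = PowerSeries.mk fun a => if 1 ≤ a ∧ (a, a) ∈ S then 1 else 0)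
    (hE0 : E0 = PowerSeries.mk fun n => ∑ j ∈ Finset.range (n + 1), (aCount S j n : ℚ))
    (hE1 : E1 = PowerSeries.mk fun n => ∑ j ∈ Finset.range n, (aCount S j n : ℚ)) :
    P * (1 + (2 - T) * E1) = E0 := by
  have mulco : ∀ (f g : ℕ → ℕ) (n : ℕ),
      (PowerSeries.coeff n) ((PowerSeries.mk fun i => (f i : ℚ)) *
        (PowerSeries.mk fun i => (g i : ℚ)))
        = ((∑ k ∈ Finset.range (n + 1), f k * g (n - k) : ℕ) : ℚ) := by
    intro f g n
    rw [PowerSeries.coeff_mul, Finset.Nat.sum_antidiagonal_eq_sum_range_succ_mk]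
    push_cast
    simp [PowerSeries.coeff_mk]
  have hE0' : E0 = PowerSeries.mk fun n => ((E0set S n).ncard : ℚ) := by
    rw [hE0]
    apply PowerSeries.ext
    intro n
    rw [PowerSeries.coeff_mk, PowerSeries.coeff_mk, E0_fiber S h00 n]
    push_cast
    rfl
  have hE1' : E1 = PowerSeries.mk fun n => ((E1res S n).ncard : ℚ) := by
    rw [hE1]
    apply PowerSeries.ext
    intro n
    rw [PowerSeries.coeff_mk, PowerSeries.coeff_mk, E1_fiber S h00 n]
    push_cast
    rfl
  have hP' : P = PowerSeries.mk fun n => ((Psets S n).ncard : ℚ) := by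
    rw [hP]
    apply PowerSeries.ext
    intro n
    rw [PowerSeries.coeff_mk, PowerSeries.coeff_mk, pCat_eq S n]
  set Cs : PowerSeries ℚ := PowerSeries.mk fun a => ((PCset S a).ncard : ℚ) with hCs
  set Fs : PowerSeries ℚ := PowerSeries.mk fun n => ((Fset S n).ncard : ℚ) with hFs
  set Gs : PowerSeries ℚ := PowerSeries.mk fun n => ((Gset S n).ncard : ℚ) with hGs
  set Ds : PowerSeries ℚ := PowerSeries.mk fun n => ((Dset S n).ncard : ℚ) with hDs
  set Us : PowerSeries ℚ := PowerSeries.mk fun a => ((Uset S a).ncard : ℚ) with hUs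
  have hA1 : E0 = Fs + Cs * E0 := by
    rw [hE0', hFs, hCs]
    apply PowerSeries.ext
    intro n
    rw [map_add, PowerSeries.coeff_mk, PowerSeries.coeff_mk, mulco]
    exact_mod_cast congrArg (Nat.cast (R := ℚ)) (N1 S h00 n)
  have hA2 : P = 1 + Cs * P := by
    rw [hP', hCs]
    apply PowerSeries.ext
    intro n
    rw [map_add, PowerSeries.coeff_mk, mulco, PowerSeries.coeff_one]
    cases n with
    | zero =>
      rw [Psets_zero S h00]
      simp [PCset_zero S h00]
    | succ n =>
      rw [N3 S h00 (Nat.succ_le_succ (Nat.zero_le n))]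
      simp
  have hA3 : E1 = Gs + Cs * E1 := by
    rw [hE1', hGs, hCs]
    apply PowerSeries.ext
    intro n
    rw [map_add, PowerSeries.coeff_mk, PowerSeries.coeff_mk, mulco]
    exact_mod_cast congrArg (Nat.cast (R := ℚ)) (N2 S h00 n)
  have hA4 : Ds = 1 + Us * E1 := by
    rw [hE1', hDs, hUs]
    apply PowerSeries.ext
    intro n
    rw [map_add, PowerSeries.coeff_mk, mulco, PowerSeries.coeff_one]
    cases n with
    | zero =>
      rw [Dset_zero S h00]
      simp [E1res_zero S]
    | succ n =>
      rw [cross_card S h00 hhoriz hslope (Nat.succ_le_succ (Nat.zero_le n))]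
      simp
  have hA5 : Cs = T + Us - 1 := by
    rw [hT, hCs, hUs]
    apply PowerSeries.ext
    intro n
    rw [map_sub, map_add, PowerSeries.coeff_mk, PowerSeries.coeff_mk, PowerSeries.coeff_mk,
      PowerSeries.coeff_one]
    cases n with
    | zero =>
      rw [PCset_zero S h00, Uset_zero S]
      simp
    | succ n =>
      rw [PC_card S h00 hhoriz hslope (Nat.succ_le_succ (Nat.zero_le n))]
      by_cases hmem : (n + 1, n + 1) ∈ S
      · simp [hmem]
      · simp [hmem]
  have hA6 : Fs = Gs + Ds := by
    rw [hFs, hGs, hDs]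
    apply PowerSeries.ext
    intro n
    rw [map_add, PowerSeries.coeff_mk, PowerSeries.coeff_mk, PowerSeries.coeff_mk]
    exact_mod_cast congrArg (Nat.cast (R := ℚ)) (N6 S h00 n)
  have hFkey : Fs = 1 + (2 - T) * E1 := by
    linear_combination hA6 - hA3 + hA4 - E1 * hA5
  rw [← hFkey]
  linear_combination (-P) * hA1 + E0 * hA2
end

section
/- Let S be a step set whose only horizontal step is (1,0) (i.e. (a,0) ∈ S if and only if a = 1) and such that every (a,b) ∈ S with b > 0 satisfies a ≤ b (the slope condition for the Catalan boundary (i+1)). Let P(t) = Σ_{n≥0} p_n tⁿ, let D_0(t) = Σ_{n≥0} a_{n,n} tⁿ, and let D_1(t) = Σ_{n≥1} a_{n−1,n} tⁿ. Then in ℚ⟦t⟧: P(t) · (1 + D_1(t)) = D_0(t). -/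
namespace Stmt3Aux

lemma xPart_low (p1 r : List (ℕ × ℕ)) {j : ℕ} (hj : j ≤ p1.length) :
    xPart (p1 ++ r) j = xPart p1 j := by
  unfold xPart
  rw [List.take_append_of_le_length hj]

lemma yPart_low (p1 r : List (ℕ × ℕ)) {j : ℕ} (hj : j ≤ p1.length) :
    yPart (p1 ++ r) j = yPart p1 j := by
  unfold yPart
  rw [List.take_append_of_le_length hj]

lemma xPart_high (p1 p2 : List (ℕ × ℕ)) (s : ℕ × ℕ) {j : ℕ} (hj : p1.length < j) :
    xPart (p1 ++ s :: p2) j = xPart p1 p1.length + s.1 + xPart p2 (j - p1.length - 1) := by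
  have h1 : j - p1.length = (j - p1.length - 1) + 1 := by omega
  unfold xPart
  rw [List.take_append, List.take_of_length_le (by omega), h1,
    List.take_succ_cons, List.take_length]
  simp [Nat.add_assoc]

lemma yPart_high (p1 p2 : List (ℕ × ℕ)) (s : ℕ × ℕ) {j : ℕ} (hj : p1.length < j) :
    yPart (p1 ++ s :: p2) j = yPart p1 p1.length + s.2 + yPart p2 (j - p1.length - 1) := by
  have h1 : j - p1.length = (j - p1.length - 1) + 1 := by omega
  unfold yPart
  rw [List.take_append, List.take_of_length_le (by omega), h1,
    List.take_succ_cons, List.take_length]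
  simp [Nat.add_assoc]

lemma xPart_total (p1 p2 : List (ℕ × ℕ)) (s : ℕ × ℕ) :
    xPart (p1 ++ s :: p2) (p1 ++ s :: p2).length =
      xPart p1 p1.length + s.1 + xPart p2 p2.length := by
  have h : (p1 ++ s :: p2).length - p1.length - 1 = p2.length := by simp <;> omega
  rw [xPart_high _ _ _ (by simp <;> omega), h]

lemma yPart_total (p1 p2 : List (ℕ × ℕ)) (s : ℕ × ℕ) :
    yPart (p1 ++ s :: p2) (p1 ++ s :: p2).length =
      yPart p1 p1.length + s.2 + yPart p2 p2.length := by
  have h : (p1 ++ s :: p2).length - p1.length - 1 = p2.length := by simp <;> omega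
  rw [yPart_high _ _ _ (by simp <;> omega), h]

lemma pathSet_finite (S : Set (ℕ × ℕ)) (h00 : (0, 0) ∉ S) (n m : ℕ) :
    {p : List (ℕ × ℕ) | IsPath S n m p}.Finite := by
  classical
  set T : Finset (ℕ × ℕ) := Finset.range (n + 1) ×ˢ Finset.range (m + 1) with hT
  have key : ∀ q : List (ℕ × ℕ), (∀ st ∈ q, st ∈ S) →
      q.length ≤ (q.map Prod.fst).sum + (q.map Prod.snd).sum := by
    intro q
    induction q with
    | nil => simp
    | cons a t ih =>
      intro hq
      obtain ⟨a1, a2⟩ := a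
      have ha := hq (a1, a2) (by simp)
      have h1 : 1 ≤ a1 + a2 := by
        by_contra h
        have : a1 = 0 ∧ a2 = 0 := by omega
        rw [this.1, this.2] at ha
        exact h00 ha
      have := ih (fun st hst => hq st (List.mem_cons_of_mem _ hst))
      simp only [List.length_cons, List.map_cons, List.sum_cons]
      omega
  have hsub : {p : List (ℕ × ℕ) | IsPath S n m p} ⊆
      (fun l : List {x // x ∈ T} => l.map Subtype.val) ''
        {l : List {x // x ∈ T} | l.length ≤ n + m} := by
    intro p hp
    obtain ⟨hmem, hx, hy⟩ := hp
    have hX : (p.map Prod.fst).sum = n := by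
      simpa [xPart, List.take_length] using hx
    have hY : (p.map Prod.snd).sum = m := by
      simpa [yPart, List.take_length] using hy
    have hbound : ∀ st ∈ p, st ∈ T := by
      intro st hst
      have h1 : st.1 ≤ n := by
        rw [← hX]
        exact List.single_le_sum (fun _ _ => Nat.zero_le _) _
          (List.mem_map_of_mem (f := Prod.fst) hst)
      have h2 : st.2 ≤ m := by
        rw [← hY]
        exact List.single_le_sum (fun _ _ => Nat.zero_le _) _
          (List.mem_map_of_mem (f := Prod.snd) hst)
      simp only [hT, Finset.mem_product, Finset.mem_range]
      omega
    refine ⟨p.pmap (fun x h => (⟨x, h⟩ : {x // x ∈ T})) hbound, ?_, ?_⟩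
    swap
    · simp [List.map_pmap]

    have hlen : p.length ≤ n + m := by
      have := key p hmem
      omega
    simpa [List.length_pmap] using hlen
  exact Set.Finite.subset (Set.Finite.image _ (List.finite_length_le _ _)) hsub

/-- The set of paths to `(n,n)` whose first boundary violation occurs just after a
Catalan prefix ending at `(k,k)`. -/
def Dec (S : Set (ℕ × ℕ)) (n k : ℕ) : Set (List (ℕ × ℕ)) :=
  {p | ∃ p1 p2 : List (ℕ × ℕ), p = p1 ++ (1, 0) :: p2 ∧ IsPath S k k p1 ∧ IsCatalan p1 ∧
    IsPath S (n - 1 - k) (n - k) p2}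

lemma dec_subset (S : Set (ℕ × ℕ)) (hhoriz : ∀ a : ℕ, (a, 0) ∈ S ↔ a = 1)
    {n k : ℕ} (hk : k < n) {p : List (ℕ × ℕ)} (hp : p ∈ Dec S n k) : IsPath S n n p := by
  obtain ⟨p1, p2, rfl, ⟨hm1, hx1, hy1⟩, _, ⟨hm2, hx2, hy2⟩⟩ := hp
  refine ⟨?_, ?_, ?_⟩
  · intro st hst
    rcases List.mem_append.1 hst with h | h
    · exact hm1 _ h
    · rcases List.mem_cons.1 h with h | h
      · rw [h]; exact (hhoriz 1).2 rfl
      · exact hm2 _ h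
  · rw [xPart_total, hx1, hx2]
    omega
  · rw [yPart_total, hy1, hy2]
    omega

lemma not_lt_of_dec {k : ℕ} {p1 p2 q1 q2 : List (ℕ × ℕ)}
    (hx1 : xPart p1 p1.length = k) (hy1 : yPart p1 p1.length = k)
    (hc2 : IsCatalan q1)
    (heq : p1 ++ (1, 0) :: p2 = q1 ++ (1, 0) :: q2) :
    ¬ p1.length < q1.length := by
  intro h
  have hj : p1.length + 1 ≤ q1.length := h
  have e1 : xPart (p1 ++ (1, 0) :: p2) (p1.length + 1) = k + 1 := by
    rw [xPart_high _ _ _ (Nat.lt_succ_self _), hx1]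
    simp [xPart]
  have e2 : yPart (p1 ++ (1, 0) :: p2) (p1.length + 1) = k := by
    rw [yPart_high _ _ _ (Nat.lt_succ_self _), hy1]
    simp [yPart]
  have e3 : xPart (p1 ++ (1, 0) :: p2) (p1.length + 1) ≤
      yPart (p1 ++ (1, 0) :: p2) (p1.length + 1) := by
    rw [heq, xPart_low _ _ hj, yPart_low _ _ hj]
    exact hc2 _ hj
  omega

lemma dec_unique {S : Set (ℕ × ℕ)} {k k' : ℕ} {p1 p2 q1 q2 : List (ℕ × ℕ)}
    (h1 : IsPath S k k p1) (hc1 : IsCatalan p1)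
    (h2 : IsPath S k' k' q1) (hc2 : IsCatalan q1)
    (heq : p1 ++ (1, 0) :: p2 = q1 ++ (1, 0) :: q2) :
    p1 = q1 ∧ p2 = q2 := by
  have hlen : p1.length = q1.length := by
    rcases lt_trichotomy p1.length q1.length with h | h | h
    · exact absurd h (not_lt_of_dec h1.2.1 h1.2.2 hc2 heq)
    · exact h
    · exact absurd h (not_lt_of_dec h2.2.1 h2.2.2 hc1 heq.symm)
  obtain ⟨ha, hb⟩ := List.append_inj heq hlen
  exact ⟨ha, by injection hb⟩

lemma dec_not_catalan {S : Set (ℕ × ℕ)} {n k : ℕ} {p : List (ℕ × ℕ)}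
    (hp : p ∈ Dec S n k) : ¬ IsCatalan p := by
  obtain ⟨p1, p2, rfl, ⟨_, hx1, hy1⟩, _, _⟩ := hp
  intro hc
  have e1 : xPart (p1 ++ (1, 0) :: p2) (p1.length + 1) = k + 1 := by
    rw [xPart_high _ _ _ (Nat.lt_succ_self _), hx1]
    simp [xPart]
  have e2 : yPart (p1 ++ (1, 0) :: p2) (p1.length + 1) = k := by
    rw [yPart_high _ _ _ (Nat.lt_succ_self _), hy1]
    simp [yPart]
  have := hc (p1.length + 1) (by simp <;> omega)
  omega

lemma dec_disjoint {S : Set (ℕ × ℕ)} {n k k' : ℕ} {p : List (ℕ × ℕ)}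
    (hp : p ∈ Dec S n k) (hp' : p ∈ Dec S n k') : k = k' := by
  obtain ⟨p1, p2, rfl, h1, hc1, _⟩ := hp
  obtain ⟨q1, q2, heq, h2, hc2, _⟩ := hp'
  obtain ⟨ha, _⟩ := dec_unique h1 hc1 h2 hc2 heq
  rw [← h1.2.1, ← h2.2.1, ha]

lemma cover {S : Set (ℕ × ℕ)}
    (hhoriz : ∀ a : ℕ, (a, 0) ∈ S ↔ a = 1)
    (hslope : ∀ a b : ℕ, (a, b) ∈ S → 0 < b → a ≤ b)
    {n : ℕ} {p : List (ℕ × ℕ)} (hp : IsPath S n n p) (hnc : ¬ IsCatalan p) :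
    ∃ k < n, p ∈ Dec S n k := by
  classical
  obtain ⟨hmem, hxn, hyn⟩ := hp
  have hex : ∃ j, j ≤ p.length ∧ yPart p j < xPart p j := by
    unfold IsCatalan at hnc
    push_neg at hnc
    obtain ⟨j, hj1, hj2⟩ := hnc
    exact ⟨j, hj1, hj2⟩
  set j := Nat.find hex with hjdef
  obtain ⟨hjle, hjbad⟩ := Nat.find_spec hex
  rw [← hjdef] at hjle hjbad
  have hj0 : j ≠ 0 := by
    intro h
    rw [h] at hjbad
    simp [xPart, yPart] at hjbad
  obtain ⟨i, hi⟩ : ∃ i, j = i + 1 := ⟨j - 1, by omega⟩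
  have hilt : i < p.length := by omega
  have hmin : ∀ j' ≤ i, xPart p j' ≤ yPart p j' := by
    intro j' hj'
    by_contra h
    have := Nat.find_min hex (m := j') (by omega)
    push_neg at this
    exact absurd (this (by omega)) (by omega)
  -- decompose p
  set s : ℕ × ℕ := p[i] with hs
  set p1 : List (ℕ × ℕ) := p.take i with hp1
  set p2 : List (ℕ × ℕ) := p.drop (i + 1) with hp2
  have hsplit : p = p1 ++ s :: p2 := by
    rw [hp1, hp2, hs, ← List.drop_eq_getElem_cons hilt, List.take_append_drop]
  have hlen1 : p1.length = i := by
    rw [hp1, List.length_take]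
    omega
  have hxi : xPart p1 p1.length = xPart p i := by
    conv_rhs => rw [hsplit]
    rw [xPart_low _ _ (by omega), hlen1]
  have hyi : yPart p1 p1.length = yPart p i := by
    conv_rhs => rw [hsplit]
    rw [yPart_low _ _ (by omega), hlen1]
  have hgood : xPart p i ≤ yPart p i := hmin i le_rfl
  have hxj : xPart p j = xPart p i + s.1 := by
    conv_lhs => rw [hsplit]
    rw [hi, xPart_high _ _ _ (by omega), hxi]
    simp [xPart, hlen1]
  have hyj : yPart p j = yPart p i + s.2 := by
    conv_lhs => rw [hsplit]
    rw [hi, yPart_high _ _ _ (by omega), hyi]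
    simp [yPart, hlen1]
  have hsS : s ∈ S := hmem _ (by rw [hsplit]; exact List.mem_append.2 (Or.inr (by simp))
    )
  have hs2 : s.2 = 0 := by
    by_contra h
    have := hslope s.1 s.2 (by simpa using hsS) (by omega)
    omega
  have hs1 : s.1 = 1 := by
    have : (s.1, 0) ∈ S := by
      rw [← hs2]
      simpa using hsS
    exact (hhoriz s.1).1 this
  have hseq : s = (1, 0) := by
    have h : s = (s.1, s.2) := rfl
    rw [h, hs1, hs2]
  have hk : xPart p i = yPart p i := by omega
  refine ⟨xPart p i, ?_, p1, p2, by rw [hsplit, hseq], ⟨?_, ?_, ?_⟩, ?_, ⟨?_, ?_, ?_⟩⟩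
  · -- k < n
    have hxtot : xPart p p.length = xPart p i + s.1 + xPart p2 p2.length := by
      conv_lhs => rw [hsplit]
      rw [xPart_total, hxi]
    omega
  · intro st hst
    exact hmem _ (by rw [hsplit]; exact List.mem_append.2 (Or.inl hst))
  · rw [hxi]
  · rw [hyi, hk]
  · intro j' hj'
    have hj'i : j' ≤ i := by omega
    have l1 : xPart p1 j' = xPart p j' := by
      conv_rhs => rw [hsplit]
      rw [xPart_low _ _ (by omega)]
    have l2 : yPart p1 j' = yPart p j' := by
      conv_rhs => rw [hsplit]
      rw [yPart_low _ _ (by omega)]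
    rw [l1, l2]
    exact hmin j' hj'i
  · intro st hst
    exact hmem _ (by rw [hsplit]; exact List.mem_append.2 (Or.inr (by simp [hst])))
  · -- xPart p2 p2.length = n - 1 - k
    have hxtot : xPart p p.length = xPart p i + s.1 + xPart p2 p2.length := by
      conv_lhs => rw [hsplit]
      rw [xPart_total, hxi]
    omega
  · have hytot : yPart p p.length = yPart p i + s.2 + yPart p2 p2.length := by
      conv_lhs => rw [hsplit]
      rw [yPart_total, hyi]
    have hxtot : xPart p p.length = xPart p i + s.1 + xPart p2 p2.length := by
      conv_lhs => rw [hsplit]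
      rw [xPart_total, hxi]
    omega

lemma ncard_prod {α β : Type*} {s : Set α} {t : Set β} (hs : s.Finite) (ht : t.Finite) :
    (s ×ˢ t).ncard = s.ncard * t.ncard := by
  classical
  rw [Set.ncard_eq_toFinset_card _ (hs.prod ht), Set.ncard_eq_toFinset_card _ hs,
    Set.ncard_eq_toFinset_card _ ht]
  rw [← Finset.card_product]
  congr 1
  ext x
  simp [Set.Finite.mem_toFinset]

lemma dec_ncard (S : Set (ℕ × ℕ)) (h00 : (0, 0) ∉ S) {n k : ℕ} (hk : k < n) :
    (Dec S n k).ncard = pCatalan S k * aCount S (n - 1 - k) (n - k) := by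
  classical
  have himg : Dec S n k =
      (fun q : List (ℕ × ℕ) × List (ℕ × ℕ) => q.1 ++ (1, 0) :: q.2) ''
        ({p | IsPath S k k p ∧ IsCatalan p} ×ˢ {p | IsPath S (n - 1 - k) (n - k) p}) := by
    ext p
    constructor
    · rintro ⟨p1, p2, rfl, h1, h2, h3⟩
      exact ⟨(p1, p2), ⟨⟨h1, h2⟩, h3⟩, rfl⟩
    · rintro ⟨⟨p1, p2⟩, ⟨⟨h1, h2⟩, h3⟩, rfl⟩
      exact ⟨p1, p2, rfl, h1, h2, h3⟩
  have hfin1 : {p : List (ℕ × ℕ) | IsPath S k k p ∧ IsCatalan p}.Finite :=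
    (pathSet_finite S h00 k k).subset (fun p hp => hp.1)
  have hfin2 := pathSet_finite S h00 (n - 1 - k) (n - k)
  rw [himg, Set.ncard_image_of_injOn, ncard_prod hfin1 hfin2]
  · rfl
  · rintro ⟨p1, p2⟩ ⟨hp1, hp2⟩ ⟨q1, q2⟩ ⟨hq1, hq2⟩ heq
    obtain ⟨ha, hb⟩ := dec_unique hp1.1 hp1.2 hq1.1 hq1.2 heq
    exact Prod.ext ha hb

lemma ncard_biUnion {α : Type*} (t : Finset ℕ) (f : ℕ → Set α)
    (hf : ∀ k ∈ t, (f k).Finite)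
    (hdisj : ∀ k ∈ t, ∀ k' ∈ t, k ≠ k' → Disjoint (f k) (f k')) :
    (⋃ k ∈ t, f k).ncard = ∑ k ∈ t, (f k).ncard := by
  classical
  induction t using Finset.induction with
  | empty => simp
  | @insert a tl hx ih =>
    have hunion : (⋃ k ∈ insert a tl, f k) = f a ∪ ⋃ k ∈ tl, f k :=
      Finset.set_biUnion_insert _ _ _
    rw [hunion, Finset.sum_insert hx,
      Set.ncard_union_eq ?_ (hf a (Finset.mem_insert_self a tl)) ?_,
      ih (fun k hk => hf k (Finset.mem_insert_of_mem hk))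
        (fun k hk k' hk' h => hdisj k (Finset.mem_insert_of_mem hk)
          k' (Finset.mem_insert_of_mem hk') h)]
    · rw [Set.disjoint_left]
      intro x hx1 hx2
      simp only [Set.mem_iUnion] at hx2
      obtain ⟨k, hk, hxk⟩ := hx2
      have : a ≠ k := by rintro rfl; exact hx hk
      exact (Set.disjoint_left.1 (hdisj a (Finset.mem_insert_self a tl)
        k (Finset.mem_insert_of_mem hk) this)) hx1 hxk
    · exact Set.Finite.biUnion (Set.finite_mem_finset tl)
        (fun k hk => hf k (Finset.mem_insert_of_mem hk))

lemma recur (S : Set (ℕ × ℕ)) (h00 : (0, 0) ∉ S)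
    (hhoriz : ∀ a : ℕ, (a, 0) ∈ S ↔ a = 1)
    (hslope : ∀ a b : ℕ, (a, b) ∈ S → 0 < b → a ≤ b) (n : ℕ) :
    aCount S n n = pCatalan S n +
      ∑ k ∈ Finset.range n, pCatalan S k * aCount S (n - 1 - k) (n - k) := by
  classical
  have hA : {p : List (ℕ × ℕ) | IsPath S n n p} =
      {p : List (ℕ × ℕ) | IsPath S n n p ∧ IsCatalan p} ∪
        ⋃ k ∈ Finset.range n, Dec S n k := by
    ext p
    constructor
    · intro hp
      by_cases hc : IsCatalan p
      · exact Or.inl ⟨hp, hc⟩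
      · right
        obtain ⟨k, hk, hd⟩ := cover hhoriz hslope hp hc
        exact Set.mem_biUnion (Finset.mem_range.2 hk) hd
    · rintro (⟨hp, _⟩ | h)
      · exact hp
      · simp only [Set.mem_iUnion] at h
        obtain ⟨k, hk, hd⟩ := h
        exact dec_subset S hhoriz (Finset.mem_range.1 hk) hd
  have hfinCat : {p : List (ℕ × ℕ) | IsPath S n n p ∧ IsCatalan p}.Finite :=
    (pathSet_finite S h00 n n).subset (fun p hp => hp.1)
  have hfinDec : ∀ k ∈ Finset.range n, (Dec S n k).Finite := fun k hk =>
    (pathSet_finite S h00 n n).subset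
      (fun p hp => dec_subset S hhoriz (Finset.mem_range.1 hk) hp)
  have hdisj : ∀ k ∈ Finset.range n, ∀ k' ∈ Finset.range n, k ≠ k' →
      Disjoint (Dec S n k) (Dec S n k') := by
    intro k _ k' _ hne
    rw [Set.disjoint_left]
    intro p hp hp'
    exact hne (dec_disjoint hp hp')
  have hdisj2 : Disjoint {p : List (ℕ × ℕ) | IsPath S n n p ∧ IsCatalan p}
      (⋃ k ∈ Finset.range n, Dec S n k) := by
    rw [Set.disjoint_left]
    intro p hp hp'
    simp only [Set.mem_iUnion] at hp'
    obtain ⟨k, _, hd⟩ := hp'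
    exact dec_not_catalan hd hp.2
  rw [aCount, hA, Set.ncard_union_eq hdisj2 hfinCat
    (Set.Finite.biUnion (Set.finite_mem_finset (Finset.range n)) (t := fun k => Dec S n k) hfinDec),
    ncard_biUnion _ _ hfinDec hdisj]
  congr 1
  refine Finset.sum_congr rfl fun k hk => ?_
  exact dec_ncard S h00 (Finset.mem_range.1 hk)

end Stmt3Aux

theorem stmt3 (S : Set (ℕ × ℕ)) (h00 : (0, 0) ∉ S)
    (hhoriz : ∀ a : ℕ, (a, 0) ∈ S ↔ a = 1)
    (hslope : ∀ a b : ℕ, (a, b) ∈ S → 0 < b → a ≤ b)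
    (P D0 D1 : PowerSeries ℚ)
    (hP : P = PowerSeries.mk fun n => (pCatalan S n : ℚ))
    (hD0 : D0 = PowerSeries.mk fun n => (aCount S n n : ℚ))
    (hD1 : D1 = PowerSeries.mk fun n => match n with
      | 0 => 0
      | k + 1 => (aCount S k (k + 1) : ℚ)) :
    P * (1 + D1) = D0 := by
  classical
  subst hP hD0 hD1
  ext n
  rw [PowerSeries.coeff_mul]
  simp only [map_add, PowerSeries.coeff_one, PowerSeries.coeff_mk]
  rw [Finset.Nat.sum_antidiagonal_eq_sum_range_succ
    (f := fun i j => (pCatalan S i : ℚ) *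
      ((if j = 0 then (1 : ℚ) else 0) + (match j with
        | 0 => (0 : ℚ)
        | k + 1 => (aCount S k (k + 1) : ℚ))))]
  rw [Finset.sum_range_succ]
  have hlast : (pCatalan S n : ℚ) *
      ((if n - n = 0 then (1 : ℚ) else 0) + (match n - n with
        | 0 => (0 : ℚ)
        | k + 1 => (aCount S k (k + 1) : ℚ))) = (pCatalan S n : ℚ) := by
    simp
  rw [hlast]
  have hmid : ∀ k ∈ Finset.range n, (pCatalan S k : ℚ) *
      ((if n - k = 0 then (1 : ℚ) else 0) + (match n - k with
        | 0 => (0 : ℚ)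
        | j + 1 => (aCount S j (j + 1) : ℚ))) =
      (pCatalan S k : ℚ) * (aCount S (n - 1 - k) (n - k) : ℚ) := by
    intro k hk
    have hk' : k < n := Finset.mem_range.1 hk
    obtain ⟨d, hd⟩ : ∃ d, n - k = d + 1 := ⟨n - k - 1, by omega⟩
    rw [hd]
    have hred : aCount S d (d + 1) = aCount S (n - 1 - k) (d + 1) := by
      congr 1
      omega
    show (pCatalan S k : ℚ) * ((if d + 1 = 0 then (1 : ℚ) else 0) + (aCount S d (d + 1) : ℚ)) =
      (pCatalan S k : ℚ) * (aCount S (n - 1 - k) (d + 1) : ℚ)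
    rw [hred]
    simp
  rw [Finset.sum_congr rfl hmid]
  have := Stmt3Aux.recur S h00 hhoriz hslope n
  push_cast [this]
  ring
end

section
/- Let S = {(a,0) : a ≥ 1} ∪ {(0,a) : a ≥ 1} be the set of rook steps, let p_n be the number of Catalan S-paths from (0,0) to (n,n), and let P(t) = Σ_{n≥0} p_n tⁿ ∈ ℚ⟦t⟧. Then P satisfies the quadratic equation 4t·P(t)² − (1+3t)·P(t) + 1 = 0 in ℚ⟦t⟧ (equivalently, P(t) = (1 + 3t − √(1 − 10t + 9t²))/(8t)). -/
/-- The set of rook steps: proper horizontal and vertical steps. -/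
def rookSteps : Set (ℕ × ℕ) :=
  {st | (∃ a : ℕ, 1 ≤ a ∧ st = (a, 0)) ∨ (∃ a : ℕ, 1 ≤ a ∧ st = (0, a))}

namespace RookProof

/-- generic partial sum of coordinates -/
def part (f : ℕ × ℕ → ℕ) (p : List (ℕ × ℕ)) (j : ℕ) : ℕ := ((p.take j).map f).sum

lemma xPart_eq (p : List (ℕ × ℕ)) (j : ℕ) : xPart p j = part Prod.fst p j := rfl
lemma yPart_eq (p : List (ℕ × ℕ)) (j : ℕ) : yPart p j = part Prod.snd p j := rfl

@[simp] lemma part_zero (f) (p : List (ℕ × ℕ)) : part f p 0 = 0 := by simp [part]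
@[simp] lemma part_nil (f) (j : ℕ) : part f [] j = 0 := by simp [part]
lemma part_cons_succ (f) (s : ℕ × ℕ) (p : List (ℕ × ℕ)) (j : ℕ) :
    part f (s :: p) (j + 1) = f s + part f p j := by simp [part]
lemma part_length (f) (p : List (ℕ × ℕ)) : part f p p.length = (p.map f).sum := by
  simp [part]
lemma part_of_length_le (f) (p : List (ℕ × ℕ)) {j : ℕ} (h : p.length ≤ j) :
    part f p j = part f p p.length := by
  simp [part, List.take_of_length_le h]
lemma part_append (f) (p q : List (ℕ × ℕ)) (j : ℕ) :
    part f (p ++ q) (p.length + j) = part f p p.length + part f q j := by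
  simp [part, List.take_append]
  rw [List.take_of_length_le (by simp)]
lemma part_append_left (f) (p q : List (ℕ × ℕ)) {j : ℕ} (h : j ≤ p.length) :
    part f (p ++ q) j = part f p j := by
  rw [part, List.take_append]
  simp [Nat.sub_eq_zero_of_le h, part]
lemma part_mono (f) (p : List (ℕ × ℕ)) {j j' : ℕ} (h : j ≤ j') : part f p j ≤ part f p j' := by
  rw [part, part]
  have h1 : p.take j = (p.take j').take j := by rw [List.take_take, Nat.min_eq_left h]
  rw [h1]
  calc (((p.take j').take j).map f).sum
      ≤ (((p.take j').take j).map f).sum + (((p.take j').drop j).map f).sum := Nat.le_add_right _ _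
    _ = ((p.take j').map f).sum := by
        rw [← List.sum_append, ← List.map_append, List.take_append_drop]
lemma part_take (f) (p : List (ℕ × ℕ)) (k j : ℕ) :
    part f (p.take k) j = part f p (min j k) := by
  simp [part, List.take_take]
lemma part_add (f) (p : List (ℕ × ℕ)) {k : ℕ} (j : ℕ) (hk : k ≤ p.length) :
    part f p (k + j) = part f p k + part f (p.drop k) j := by
  have hl : (p.take k).length = k := by simp [hk]
  have h2 := part_append f (p.take k) (p.drop k) j
  rw [List.take_append_drop, hl] at h2
  rw [h2, part_take, Nat.min_self]

lemma rook_pos {st : ℕ × ℕ} (h : st ∈ rookSteps) : 1 ≤ st.1 + st.2 := by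
  rcases h with ⟨a, ha, rfl⟩ | ⟨a, ha, rfl⟩ <;> simpa
lemma rook_or {st : ℕ × ℕ} (h : st ∈ rookSteps) : st.2 = 0 ∨ st.1 = 0 := by
  rcases h with ⟨a, ha, rfl⟩ | ⟨a, ha, rfl⟩ <;> simp

lemma length_le_sum {l : List ℕ} (h : ∀ x ∈ l, 1 ≤ x) : l.length ≤ l.sum := by
  induction l with
  | nil => simp
  | cons a t ih =>
      simp only [List.length_cons, List.sum_cons]
      have := h a (by simp)
      have := ih (fun x hx => h x (by simp [hx]))
      omega

lemma isPath_length_le {n m : ℕ} {p : List (ℕ × ℕ)} (h : IsPath rookSteps n m p) :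
    p.length ≤ n + m := by
  have hx : (p.map Prod.fst).sum = n := by
    have := h.2.1; rwa [xPart_eq, part_length] at this
  have hy : (p.map Prod.snd).sum = m := by
    have := h.2.2; rwa [yPart_eq, part_length] at this
  have hsum : (p.map (fun st => st.1 + st.2)).sum = n + m := by
    rw [← hx, ← hy]
    induction p with
    | nil => simp
    | cons a t ih => simp [ih]; omega
  have hlen : (p.map (fun st => st.1 + st.2)).length ≤ (p.map (fun st => st.1 + st.2)).sum := by
    apply length_le_sum
    intro x hx
    simp only [List.mem_map] at hx
    obtain ⟨st, hst, rfl⟩ := hx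
    exact rook_pos (h.1 st hst)
  simpa [hsum] using hlen

lemma isPath_entry_le {n m : ℕ} {p : List (ℕ × ℕ)} (h : IsPath rookSteps n m p) :
    ∀ st ∈ p, st.1 ≤ n ∧ st.2 ≤ m := by
  intro st hst
  have hx : (p.map Prod.fst).sum = n := by
    have := h.2.1; rwa [xPart_eq, part_length] at this
  have hy : (p.map Prod.snd).sum = m := by
    have := h.2.2; rwa [yPart_eq, part_length] at this
  constructor
  · rw [← hx]
    exact List.single_le_sum (fun x _ => Nat.zero_le x) _ (List.mem_map_of_mem hst)
  · rw [← hy]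
    exact List.single_le_sum (fun x _ => Nat.zero_le x) _ (List.mem_map_of_mem hst)

lemma finite_isPath (n m : ℕ) : {p : List (ℕ × ℕ) | IsPath rookSteps n m p}.Finite := by
  classical
  have hfin : (Set.Iic ((n, m) : ℕ × ℕ)).Finite := Set.finite_Iic _
  haveI : Finite ↥(Set.Iic ((n, m) : ℕ × ℕ)) := hfin.to_subtype
  have hL : {l : List ↥(Set.Iic ((n, m) : ℕ × ℕ)) | l.length ≤ n + m}.Finite :=
    List.finite_length_le _ _
  have himg := hL.image (List.map Subtype.val)
  apply himg.subset
  intro p hp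
  simp only [Set.mem_setOf_eq] at hp
  refine ⟨p.attach.map (fun x => ⟨x.1, ?_⟩), ?_, ?_⟩
  · have := isPath_entry_le hp x.1 x.2
    simp only [Set.mem_Iic, Prod.mk_le_mk]
    exact ⟨this.1, this.2⟩
  · simp only [Set.mem_setOf_eq, List.length_map, List.length_attach]
    exact isPath_length_le hp
  · simp [List.map_map, Function.comp_def]
    exact List.attach_map_subtype_val p


/-- Catalan rook paths to `(n,n)`. -/
def CatS (n : ℕ) : Set (List (ℕ × ℕ)) := {p | IsPath rookSteps n n p ∧ IsCatalan p}
/-- paths to `(k+1,k)` that are Catalan except at the final node. -/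
def HalfS (k : ℕ) : Set (List (ℕ × ℕ)) :=
  {p | IsPath rookSteps (k + 1) k p ∧ ∀ j < p.length, xPart p j ≤ yPart p j}
/-- "prime" Catalan paths to `(m,m)`: strictly below the diagonal at interior nodes. -/
def PrmS (m : ℕ) : Set (List (ℕ × ℕ)) :=
  {p | IsPath rookSteps m m p ∧ ∀ j, 0 < j → j < p.length → xPart p j < yPart p j}

lemma pCatalan_eq (n : ℕ) : pCatalan rookSteps n = (CatS n).ncard := rfl

lemma path_ne_nil {n m : ℕ} {p : List (ℕ × ℕ)} (hp : IsPath rookSteps n m p) (hn : 1 ≤ n) :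
    p ≠ [] := by
  intro h
  subst h
  have := hp.2.1
  rw [xPart_eq] at this
  simp at this
  omega

lemma finite_CatS (n : ℕ) : (CatS n).Finite :=
  (finite_isPath n n).subset (fun p hp => hp.1)
lemma finite_HalfS (k : ℕ) : (HalfS k).Finite :=
  (finite_isPath (k + 1) k).subset (fun p hp => hp.1)
lemma finite_PrmS (m : ℕ) : (PrmS m).Finite :=
  (finite_isPath m m).subset (fun p hp => hp.1)

lemma pCatalan_zero : pCatalan rookSteps 0 = 1 := by
  rw [pCatalan_eq]
  have : CatS 0 = {[]} := by
    ext p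
    simp only [CatS, Set.mem_setOf_eq, Set.mem_singleton_iff]
    constructor
    · rintro ⟨hp, -⟩
      cases p with
      | nil => rfl
      | cons s t =>
          exfalso
          have h1 : s.1 ≤ 0 ∧ s.2 ≤ 0 := isPath_entry_le hp s (by simp)
          have := rook_pos (hp.1 s (by simp))
          omega
    · rintro rfl
      refine ⟨⟨by simp, ?_, ?_⟩, ?_⟩
      · simp [xPart]
      · simp [yPart]
      · intro j hj
        simp at hj
        subst hj
        simp [xPart, yPart]
  rw [this, Set.ncard_singleton]

/-- a nonempty path whose first node satisfies `x ≤ y` starts with a vertical step -/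
lemma first_vert {n m : ℕ} {p : List (ℕ × ℕ)} (hp : IsPath rookSteps n m p) (hne : p ≠ [])
    (hcat : xPart p 1 ≤ yPart p 1) : ∃ a t, 1 ≤ a ∧ p = (0, a) :: t := by
  cases p with
  | nil => exact absurd rfl hne
  | cons s t =>
      rcases hp.1 s (by simp) with ⟨a, ha, rfl⟩ | ⟨a, ha, rfl⟩
      · exfalso
        rw [xPart_eq, yPart_eq] at hcat
        have h1 : part Prod.fst ((a, 0) :: t) 1 = a := by
          simpa using part_cons_succ Prod.fst (a, 0) t 0
        have h2 : part Prod.snd ((a, 0) :: t) 1 = 0 := by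
          simpa using part_cons_succ Prod.snd (a, 0) t 0
        omega
      · exact ⟨a, t, ha, rfl⟩

/-- a nonempty path to `(n,m)` with `m ≤ n` whose next-to-last node satisfies `x ≤ y`
ends with a horizontal step -/
lemma last_horiz {n m : ℕ} {p : List (ℕ × ℕ)} (hp : IsPath rookSteps n m p) (hne : p ≠ [])
    (hmn : m ≤ n) (hcat : xPart p (p.length - 1) ≤ yPart p (p.length - 1)) :
    ∃ b q, 1 ≤ b ∧ p = q ++ [(b, 0)] := by
  rcases p.eq_nil_or_concat' with rfl | ⟨q, s, rfl⟩
  · exact absurd rfl hne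
  rcases hp.1 s (by simp) with ⟨b, hb, rfl⟩ | ⟨b, hb, rfl⟩
  · exact ⟨b, q, hb, rfl⟩
  · exfalso
    have hlen : (q ++ [((0 : ℕ), b)]).length - 1 = q.length := by simp
    rw [hlen, xPart_eq, yPart_eq, part_append_left _ _ _ (le_refl _),
      part_append_left _ _ _ (le_refl _)] at hcat
    have hx : part Prod.fst q q.length + part Prod.fst [((0:ℕ), b)] 1 = n := by
      have := hp.2.1
      rw [xPart_eq] at this
      have h2 : (q ++ [((0:ℕ), b)]).length = q.length + 1 := by simp
      rwa [h2, part_append] at this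
    have hy : part Prod.snd q q.length + part Prod.snd [((0:ℕ), b)] 1 = m := by
      have := hp.2.2
      rw [yPart_eq] at this
      have h2 : (q ++ [((0:ℕ), b)]).length = q.length + 1 := by simp
      rwa [h2, part_append] at this
    have hx0 : part Prod.fst [((0:ℕ), b)] 1 = 0 := by
      simpa using part_cons_succ Prod.fst (0, b) [] 0
    have hb1 : part Prod.snd [((0:ℕ), b)] 1 = b := by
      simpa using part_cons_succ Prod.snd (0, b) [] 0
    omega


@[simp] lemma part_singleton (f) (s : ℕ × ℕ) : part f [s] 1 = f s := by
  simpa using part_cons_succ f s [] 0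

/-- decomposition of a `CatS` path at its (horizontal) last step -/
lemma catS_decomp {k : ℕ} {c : List (ℕ × ℕ)} (hc : c ∈ CatS k) (hk : 1 ≤ k) :
    ∃ q b, 1 ≤ b ∧ c = q ++ [(b, 0)] ∧ (∀ st ∈ q, st ∈ rookSteps) ∧
      part Prod.fst q q.length + b = k ∧ part Prod.snd q q.length = k ∧
      (∀ j ≤ q.length, part Prod.fst q j ≤ part Prod.snd q j) := by
  obtain ⟨hp, hcat⟩ := hc
  obtain ⟨b, q, hb, rfl⟩ := last_horiz hp (path_ne_nil hp hk) le_rfl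
    (hcat _ (Nat.sub_le _ _))
  have hlen : (q ++ [((b:ℕ), 0)]).length = q.length + 1 := by simp
  refine ⟨q, b, hb, rfl, fun st hst => hp.1 st (by simp [hst]), ?_, ?_, ?_⟩
  · have := hp.2.1
    rw [xPart_eq, hlen, part_append] at this
    simpa using this
  · have := hp.2.2
    rw [yPart_eq, hlen, part_append] at this
    simpa using this
  · intro j hj
    have := hcat j (by rw [hlen]; omega)
    rwa [xPart_eq, yPart_eq, part_append_left _ _ _ hj, part_append_left _ _ _ hj] at this

/-- decomposition of a `HalfS` path at its (horizontal) last step -/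
lemma halfS_decomp {k : ℕ} {p : List (ℕ × ℕ)} (hp : p ∈ HalfS k) :
    ∃ q b, 1 ≤ b ∧ p = q ++ [(b, 0)] ∧ (∀ st ∈ q, st ∈ rookSteps) ∧
      part Prod.fst q q.length + b = k + 1 ∧ part Prod.snd q q.length = k ∧
      (∀ j ≤ q.length, part Prod.fst q j ≤ part Prod.snd q j) := by
  obtain ⟨hp1, hcat⟩ := hp
  have hne : p ≠ [] := path_ne_nil hp1 (by omega)
  have hlp : 0 < p.length := List.length_pos_iff.mpr hne
  obtain ⟨b, q, hb, rfl⟩ := last_horiz hp1 hne (by omega) (hcat _ (by omega))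
  have hlen : (q ++ [((b:ℕ), 0)]).length = q.length + 1 := by simp
  refine ⟨q, b, hb, rfl, fun st hst => hp1.1 st (by simp [hst]), ?_, ?_, ?_⟩
  · have := hp1.2.1
    rw [xPart_eq, hlen, part_append] at this
    simpa using this
  · have := hp1.2.2
    rw [yPart_eq, hlen, part_append] at this
    simpa using this
  · intro j hj
    have := hcat j (by rw [hlen]; omega)
    rwa [xPart_eq, yPart_eq, part_append_left _ _ _ hj, part_append_left _ _ _ hj] at this

lemma mem_HalfS_append {k : ℕ} {q : List (ℕ × ℕ)} {b : ℕ} (hb : 1 ≤ b)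
    (hq : ∀ st ∈ q, st ∈ rookSteps)
    (hx : part Prod.fst q q.length + b = k + 1) (hy : part Prod.snd q q.length = k)
    (hcat : ∀ j ≤ q.length, part Prod.fst q j ≤ part Prod.snd q j) :
    q ++ [(b, 0)] ∈ HalfS k := by
  have hlen : (q ++ [((b:ℕ), 0)]).length = q.length + 1 := by simp
  refine ⟨⟨?_, ?_, ?_⟩, ?_⟩
  · intro st hst
    rcases List.mem_append.mp hst with h | h
    · exact hq st h
    · simp at h
      subst h
      exact Or.inl ⟨b, hb, rfl⟩
  · rw [xPart_eq, hlen, part_append]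
    simpa using hx
  · rw [yPart_eq, hlen, part_append]
    simpa using hy
  · intro j hj
    rw [hlen] at hj
    have hj' : j ≤ q.length := by omega
    rw [xPart_eq, yPart_eq, part_append_left _ _ _ hj', part_append_left _ _ _ hj']
    exact hcat j hj'

lemma mem_CatS_append {k : ℕ} {q : List (ℕ × ℕ)} {b : ℕ} (hb : 1 ≤ b)
    (hq : ∀ st ∈ q, st ∈ rookSteps)
    (hx : part Prod.fst q q.length + b = k) (hy : part Prod.snd q q.length = k)
    (hcat : ∀ j ≤ q.length, part Prod.fst q j ≤ part Prod.snd q j) :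
    q ++ [(b, 0)] ∈ CatS k := by
  have hlen : (q ++ [((b:ℕ), 0)]).length = q.length + 1 := by simp
  refine ⟨⟨?_, ?_, ?_⟩, ?_⟩
  · intro st hst
    rcases List.mem_append.mp hst with h | h
    · exact hq st h
    · simp at h
      subst h
      exact Or.inl ⟨b, hb, rfl⟩
  · rw [xPart_eq, hlen, part_append]
    simpa using hx
  · rw [yPart_eq, hlen, part_append]
    simpa using hy
  · intro j hj
    rw [hlen] at hj
    rcases Nat.lt_or_ge j (q.length + 1) with h | h
    · have hj' : j ≤ q.length := by omega
      rw [xPart_eq, yPart_eq, part_append_left _ _ _ hj', part_append_left _ _ _ hj']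
      exact hcat j hj'
    · have hj' : j = q.length + 1 := by omega
      subst hj'
      rw [xPart_eq, yPart_eq, ← hlen, part_of_length_le _ _ (le_refl _),
        part_of_length_le _ _ (le_refl _), hlen, part_append, part_append]
      simp
      omega

def hbump : List (ℕ × ℕ) → List (ℕ × ℕ)
  | [] => []
  | (a, b) :: t => (a + 1, b) :: t

def backMap (β : Bool) (c : List (ℕ × ℕ)) : List (ℕ × ℕ) :=
  if β then c ++ [(1, 0)] else (hbump c.reverse).reverse

lemma backMap_false (q : List (ℕ × ℕ)) (a b : ℕ) :
    backMap false (q ++ [(a, b)]) = q ++ [(a + 1, b)] := by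
  simp [backMap, List.reverse_append, hbump]

lemma backMap_mem {k : ℕ} (hk : 1 ≤ k) (β : Bool) {c : List (ℕ × ℕ)} (hc : c ∈ CatS k) :
    backMap β c ∈ HalfS k := by
  cases β
  · obtain ⟨q, b, hb, rfl, hq, hx, hy, hcat⟩ := catS_decomp hc hk
    rw [backMap_false]
    exact mem_HalfS_append (by omega) hq (by omega) hy hcat
  · show c ++ [(1, 0)] ∈ HalfS k
    obtain ⟨hp, hcat⟩ := hc
    refine mem_HalfS_append le_rfl hp.1 ?_ ?_ ?_
    · have := hp.2.1
      rw [xPart_eq] at this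
      omega
    · have := hp.2.2
      rw [yPart_eq] at this
      omega
    · intro j hj
      have := hcat j hj
      rwa [xPart_eq, yPart_eq] at this

lemma backMap_getLast? {k : ℕ} (hk : 1 ≤ k) (β : Bool) {c : List (ℕ × ℕ)} (hc : c ∈ CatS k) :
    ∃ b, 1 ≤ b ∧ (backMap β c).getLast? = some (b, 0) ∧ (β = true ↔ b = 1) := by
  cases β
  · obtain ⟨q, b, hb, rfl, -, -, -, -⟩ := catS_decomp hc hk
    rw [backMap_false]
    exact ⟨b + 1, by omega, List.getLast?_concat, by simp; omega⟩
  · exact ⟨1, le_rfl, List.getLast?_concat, by simp⟩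

lemma backMap_inj {k : ℕ} (hk : 1 ≤ k) {β β' : Bool} {c c' : List (ℕ × ℕ)}
    (hc : c ∈ CatS k) (hc' : c' ∈ CatS k) (h : backMap β c = backMap β' c') :
    β = β' ∧ c = c' := by
  obtain ⟨b, hb, hlast, hbit⟩ := backMap_getLast? hk β hc
  obtain ⟨b', hb', hlast', hbit'⟩ := backMap_getLast? hk β' hc'
  rw [h, hlast'] at hlast
  have hbb : b' = b := by
    have := Option.some.inj hlast
    exact (Prod.ext_iff.mp this).1
  subst hbb
  have hββ : β = β' := by
    cases β <;> cases β' <;> simp_all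
  subst hββ
  refine ⟨rfl, ?_⟩
  cases β
  · obtain ⟨q, d, hd, rfl, -, -, -, -⟩ := catS_decomp hc hk
    obtain ⟨q', d', hd', rfl, -, -, -, -⟩ := catS_decomp hc' hk
    rw [backMap_false, backMap_false] at h
    have h2 := congrArg List.reverse h
    simp only [List.reverse_append, List.reverse_cons, List.reverse_nil, List.nil_append,
      List.singleton_append, List.cons.injEq, Prod.mk.injEq] at h2
    obtain ⟨⟨hd2, -⟩, hq2⟩ := h2
    rw [List.reverse_inj] at hq2
    subst hq2
    have : d = d' := by omega
    subst this
    rfl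
  · have h0 : c ++ [(1, 0)] = c' ++ [(1, 0)] := by simpa [backMap] using h
    have h2 := congrArg List.reverse h0
    simp only [List.reverse_append, List.reverse_cons, List.reverse_nil,
      List.nil_append, List.singleton_append, List.cons.injEq] at h2
    exact List.reverse_inj.mp h2.2

lemma backMap_surj {k : ℕ} (hk : 1 ≤ k) {p : List (ℕ × ℕ)} (hp : p ∈ HalfS k) :
    ∃ β c, c ∈ CatS k ∧ backMap β c = p := by
  obtain ⟨q, b, hb, rfl, hq, hx, hy, hcat⟩ := halfS_decomp hp
  rcases Nat.lt_or_ge b 2 with h1 | h2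
  · have : b = 1 := by omega
    subst this
    refine ⟨true, q, ⟨⟨hq, ?_, ?_⟩, ?_⟩, rfl⟩
    · rw [xPart_eq]; omega
    · rw [yPart_eq]; omega
    · intro j hj
      rw [xPart_eq, yPart_eq]
      exact hcat j hj
  · refine ⟨false, q ++ [(b - 1, 0)], ?_, ?_⟩
    · exact mem_CatS_append (by omega) hq (by omega) hy hcat
    · rw [backMap_false]
      have hb1 : b - 1 + 1 = b := by omega
      rw [hb1]

lemma card_HalfS {k : ℕ} (hk : 1 ≤ k) :
    Nat.card (HalfS k) = 2 * Nat.card (CatS k) := by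
  have hbij : Function.Bijective
      (fun x : Bool × ↥(CatS k) => (⟨backMap x.1 x.2.1, backMap_mem hk x.1 x.2.2⟩ : ↥(HalfS k))) := by
    constructor
    · rintro ⟨β, c, hc⟩ ⟨β', c', hc'⟩ h
      simp only [Subtype.mk.injEq] at h
      obtain ⟨h1, h2⟩ := backMap_inj hk hc hc' h
      simp [h1, h2]
    · rintro ⟨p, hp⟩
      obtain ⟨β, c, hc, hbc⟩ := backMap_surj hk hp
      exact ⟨⟨β, c, hc⟩, by simp [hbc]⟩
  have := Nat.card_eq_of_bijective _ hbij
  rw [← this, Nat.card_prod]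
  simp


lemma eq_nil_of_total_zero {p : List (ℕ × ℕ)} (hs : ∀ st ∈ p, st ∈ rookSteps)
    (hx : part Prod.fst p p.length = 0) (hy : part Prod.snd p p.length = 0) : p = [] := by
  cases p with
  | nil => rfl
  | cons s t =>
      exfalso
      rw [part_length] at hx hy
      have h1 : s.1 ≤ (List.map Prod.fst (s :: t)).sum :=
        List.single_le_sum (fun x _ => Nat.zero_le x) _ (List.mem_map_of_mem (by simp))
      have h2 : s.2 ≤ (List.map Prod.snd (s :: t)).sum :=
        List.single_le_sum (fun x _ => Nat.zero_le x) _ (List.mem_map_of_mem (by simp))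
      have := rook_pos (hs s (by simp))
      omega

lemma length_two {n m : ℕ} {p : List (ℕ × ℕ)} (hp : IsPath rookSteps n m p) (hn : 1 ≤ n)
    (hm : 1 ≤ m) : 2 ≤ p.length := by
  cases p with
  | nil =>
      exfalso
      exact path_ne_nil hp hn rfl
  | cons s t =>
      cases t with
      | cons u v => simp
      | nil =>
          exfalso
          have hx := hp.2.1
          have hy := hp.2.2
          rw [xPart_eq] at hx
          rw [yPart_eq] at hy
          simp only [List.length_singleton, part_singleton] at hx hy
          rcases rook_or (hp.1 s (by simp)) with h | h <;> omega

/-- decomposition of a `HalfS` path at its (vertical) first step -/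
lemma halfS_first {k : ℕ} {p : List (ℕ × ℕ)} (hk : 1 ≤ k) (hp : p ∈ HalfS k) :
    ∃ a t, 1 ≤ a ∧ p = (0, a) :: t ∧ (∀ st ∈ t, st ∈ rookSteps) ∧
      part Prod.fst t t.length = k + 1 ∧ a + part Prod.snd t t.length = k ∧
      (∀ j < t.length, part Prod.fst t j ≤ a + part Prod.snd t j) := by
  obtain ⟨hp1, hcat⟩ := hp
  have hlen : 2 ≤ p.length := length_two hp1 (by omega) hk
  obtain ⟨a, t, ha, rfl⟩ := first_vert hp1 (by intro h; subst h; simp at hlen) (hcat 1 (by omega))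
  have hx := hp1.2.1
  have hy := hp1.2.2
  rw [xPart_eq, List.length_cons, part_cons_succ] at hx
  rw [yPart_eq, List.length_cons, part_cons_succ] at hy
  refine ⟨a, t, ha, rfl, fun st hst => hp1.1 st (by simp [hst]), by simpa using hx,
    by simpa using hy, ?_⟩
  intro j hj
  have := hcat (j + 1) (by simpa using hj)
  rw [xPart_eq, yPart_eq, part_cons_succ, part_cons_succ] at this
  simpa using this

/-- decomposition of a `PrmS` path at its (vertical) first step -/
lemma prmS_first {m : ℕ} {p : List (ℕ × ℕ)} (hm : 1 ≤ m) (hp : p ∈ PrmS m) :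
    ∃ a t, 1 ≤ a ∧ p = (0, a) :: t ∧ (∀ st ∈ t, st ∈ rookSteps) ∧
      part Prod.fst t t.length = m ∧ a + part Prod.snd t t.length = m ∧
      (∀ j < t.length, part Prod.fst t j < a + part Prod.snd t j) := by
  obtain ⟨hp1, hcat⟩ := hp
  have hlen : 2 ≤ p.length := length_two hp1 hm hm
  obtain ⟨a, t, ha, rfl⟩ := first_vert hp1 (by intro h; subst h; simp at hlen)
    (le_of_lt (hcat 1 (by omega) (by omega)))
  have hx := hp1.2.1
  have hy := hp1.2.2
  rw [xPart_eq, List.length_cons, part_cons_succ] at hx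
  rw [yPart_eq, List.length_cons, part_cons_succ] at hy
  refine ⟨a, t, ha, rfl, fun st hst => hp1.1 st (by simp [hst]), by simpa using hx,
    by simpa using hy, ?_⟩
  intro j hj
  have := hcat (j + 1) (by omega) (by simpa using hj)
  rw [xPart_eq, yPart_eq, part_cons_succ, part_cons_succ] at this
  simpa using this

lemma mem_PrmS_cons {k a : ℕ} {t : List (ℕ × ℕ)} (ha : 1 ≤ a) (ht : ∀ st ∈ t, st ∈ rookSteps)
    (hx : part Prod.fst t t.length = k + 1) (hy : a + part Prod.snd t t.length = k + 1)
    (hcat : ∀ j < t.length, part Prod.fst t j + 1 ≤ a + part Prod.snd t j) :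
    (0, a) :: t ∈ PrmS (k + 1) := by
  refine ⟨⟨?_, ?_, ?_⟩, ?_⟩
  · intro st hst
    rcases List.mem_cons.mp hst with rfl | h
    · exact Or.inr ⟨a, ha, rfl⟩
    · exact ht st h
  · rw [xPart_eq, List.length_cons, part_cons_succ]
    simpa using hx
  · rw [yPart_eq, List.length_cons, part_cons_succ]
    simpa using hy
  · intro j hj0 hjl
    obtain ⟨i, rfl⟩ : ∃ i, j = i + 1 := ⟨j - 1, by omega⟩
    rw [xPart_eq, yPart_eq, part_cons_succ, part_cons_succ]
    have := hcat i (by simpa using hjl)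
    simpa using this

def vbump : List (ℕ × ℕ) → List (ℕ × ℕ)
  | [] => []
  | (a, b) :: t => (a, b + 1) :: t

def frontMap (β : Bool) (c : List (ℕ × ℕ)) : List (ℕ × ℕ) :=
  if β then (0, 1) :: c else vbump c

lemma frontMap_mem {k : ℕ} (hk : 1 ≤ k) (β : Bool) {c : List (ℕ × ℕ)} (hc : c ∈ HalfS k) :
    frontMap β c ∈ PrmS (k + 1) := by
  cases β
  · obtain ⟨a, t, ha, rfl, ht, hx, hy, hcat⟩ := halfS_first hk hc
    show vbump ((0, a) :: t) ∈ PrmS (k + 1)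
    rw [vbump]
    refine mem_PrmS_cons (by omega) ht hx (by omega) ?_
    intro j hj
    have := hcat j hj
    omega
  · show (0, 1) :: c ∈ PrmS (k + 1)
    obtain ⟨hp1, hcat⟩ := hc
    have hx := hp1.2.1
    have hy := hp1.2.2
    rw [xPart_eq] at hx
    rw [yPart_eq] at hy
    refine mem_PrmS_cons le_rfl hp1.1 hx (by omega) ?_
    intro j hj
    have := hcat j hj
    rw [xPart_eq, yPart_eq] at this
    omega

lemma frontMap_head {k : ℕ} (hk : 1 ≤ k) (β : Bool) {c : List (ℕ × ℕ)} (hc : c ∈ HalfS k) :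
    ∃ a t, 1 ≤ a ∧ frontMap β c = (0, a) :: t ∧ (β = true ↔ a = 1) := by
  cases β
  · obtain ⟨a, t, ha, rfl, -, -, -, -⟩ := halfS_first hk hc
    exact ⟨a + 1, t, by omega, rfl, by simp; omega⟩
  · exact ⟨1, c, le_rfl, rfl, by simp⟩

lemma frontMap_inj {k : ℕ} (hk : 1 ≤ k) {β β' : Bool} {c c' : List (ℕ × ℕ)}
    (hc : c ∈ HalfS k) (hc' : c' ∈ HalfS k) (h : frontMap β c = frontMap β' c') :
    β = β' ∧ c = c' := by
  have hββ : β = β' := by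
    obtain ⟨a, t, ha, he, hbit⟩ := frontMap_head hk β hc
    obtain ⟨a', t', ha', he', hbit'⟩ := frontMap_head hk β' hc'
    rw [he, he'] at h
    have h1 := (List.cons.injEq _ _ _ _).mp h
    have haa : a = a' := (Prod.ext_iff.mp h1.1).2
    cases β <;> cases β' <;> simp_all
  subst hββ
  refine ⟨rfl, ?_⟩
  cases β
  · obtain ⟨d, u, hd, rfl, -, -, -, -⟩ := halfS_first hk hc
    obtain ⟨d', u', hd', rfl, -, -, -, -⟩ := halfS_first hk hc'
    simp only [frontMap, vbump, Bool.false_eq_true, if_false, List.cons.injEq,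
      Prod.mk.injEq] at h
    obtain ⟨⟨-, hdd⟩, huu⟩ := h
    have : d = d' := by omega
    subst this
    subst huu
    rfl
  · have h0 : (0, 1) :: c = (0, 1) :: c' := by simpa [frontMap] using h
    exact ((List.cons.injEq _ _ _ _).mp h0).2

lemma frontMap_surj {k : ℕ} (hk : 1 ≤ k) {p : List (ℕ × ℕ)} (hp : p ∈ PrmS (k + 1)) :
    ∃ β c, c ∈ HalfS k ∧ frontMap β c = p := by
  obtain ⟨a, t, ha, rfl, ht, hx, hy, hcat⟩ := prmS_first (by omega) hp
  rcases Nat.lt_or_ge a 2 with h1 | h2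
  · have : a = 1 := by omega
    subst this
    refine ⟨true, t, ⟨⟨ht, ?_, ?_⟩, ?_⟩, rfl⟩
    · rw [xPart_eq]; omega
    · rw [yPart_eq]; omega
    · intro j hj
      rw [xPart_eq, yPart_eq]
      have := hcat j hj
      omega
  · refine ⟨false, (0, a - 1) :: t, ⟨⟨?_, ?_, ?_⟩, ?_⟩, ?_⟩
    · intro st hst
      rcases List.mem_cons.mp hst with rfl | h
      · exact Or.inr ⟨a - 1, by omega, rfl⟩
      · exact ht st h
    · rw [xPart_eq, List.length_cons, part_cons_succ]
      simpa using hx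
    · rw [yPart_eq, List.length_cons, part_cons_succ]
      simp
      omega
    · intro j hj
      rw [xPart_eq, yPart_eq]
      match j with
      | 0 => simp
      | i + 1 =>
          rw [part_cons_succ, part_cons_succ]
          have := hcat i (by simpa using hj)
          simp
          omega
    · simp only [frontMap, Bool.false_eq_true, if_false, vbump]
      have : a - 1 + 1 = a := by omega
      rw [this]

lemma card_PrmS_succ {k : ℕ} (hk : 1 ≤ k) :
    Nat.card (PrmS (k + 1)) = 2 * Nat.card (HalfS k) := by
  have hbij : Function.Bijective
      (fun x : Bool × ↥(HalfS k) =>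
        (⟨frontMap x.1 x.2.1, frontMap_mem hk x.1 x.2.2⟩ : ↥(PrmS (k + 1)))) := by
    constructor
    · rintro ⟨β, c, hc⟩ ⟨β', c', hc'⟩ h
      simp only [Subtype.mk.injEq] at h
      obtain ⟨h1, h2⟩ := frontMap_inj hk hc hc' h
      simp [h1, h2]
    · rintro ⟨p, hp⟩
      obtain ⟨β, c, hc, hbc⟩ := frontMap_surj hk hp
      exact ⟨⟨β, c, hc⟩, by simp [hbc]⟩
  have := Nat.card_eq_of_bijective _ hbij
  rw [← this, Nat.card_prod]
  simp

lemma card_PrmS {m : ℕ} (hm : 2 ≤ m) :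
    Nat.card (PrmS m) = 4 * pCatalan rookSteps (m - 1) := by
  obtain ⟨k, rfl⟩ : ∃ k, m = k + 1 := ⟨m - 1, by omega⟩
  have hk : 1 ≤ k := by omega
  rw [card_PrmS_succ hk, card_HalfS hk, pCatalan_eq, ← Nat.card_coe_set_eq]
  simp
  ring

lemma PrmS_one : PrmS 1 = {[(0, 1), (1, 0)]} := by
  ext p
  constructor
  · intro hp
    obtain ⟨a, t, ha, rfl, ht, hx, hy, -⟩ := prmS_first le_rfl hp
    have ha1 : a = 1 := by omega
    subst ha1
    have hyt : part Prod.snd t t.length = 0 := by omega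
    cases t with
    | nil => simp at hx
    | cons s u =>
        rw [List.length_cons, part_cons_succ] at hx hyt
        have hs := ht s (by simp)
        have hs2 : s.2 = 0 := by omega
        rcases rook_or hs with h | h
        · rcases hs with ⟨b, hb, rfl⟩ | ⟨b, hb, rfl⟩
          · simp at hx hyt ⊢
            have hb1 : b = 1 := by
              have hble : b ≤ b + part Prod.fst u u.length := by omega
              omega
            subst hb1
            have : part Prod.fst u u.length = 0 := by omega
            have hu : u = [] := eq_nil_of_total_zero (fun st hst => ht st (by simp [hst]))
              this hyt
            simp [hu]
          · simp at hs2
            omega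
        · exfalso
          have := rook_pos hs
          omega
  · rintro rfl
    refine ⟨⟨?_, ?_, ?_⟩, ?_⟩
    · intro st hst
      simp at hst
      rcases hst with rfl | rfl
      · exact Or.inr ⟨1, le_rfl, rfl⟩
      · exact Or.inl ⟨1, le_rfl, rfl⟩
    · rw [xPart_eq]
      show part Prod.fst [(0,1),(1,0)] 2 = 1
      rw [show (2:ℕ) = 1 + 1 from rfl, part_cons_succ, part_singleton]
      simp
    · rw [yPart_eq]
      show part Prod.snd [(0,1),(1,0)] 2 = 1
      rw [show (2:ℕ) = 1 + 1 from rfl, part_cons_succ, part_singleton]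
      simp
    · intro j hj0 hjl
      simp at hjl
      have : j = 1 := by omega
      subst this
      rw [xPart_eq, yPart_eq, show (1:ℕ) = 0 + 1 from rfl, part_cons_succ, part_cons_succ]
      simp

lemma card_PrmS_one : Nat.card (PrmS 1) = 1 := by
  rw [Nat.card_coe_set_eq, PrmS_one, Set.ncard_singleton]


lemma fret_ex (p : List (ℕ × ℕ)) :
    ∃ j, 0 < j ∧ (part Prod.fst p j = part Prod.snd p j ∨ p.length ≤ j) :=
  ⟨p.length + 1, by omega, Or.inr (by omega)⟩

/-- first return to the diagonal -/
def fret (p : List (ℕ × ℕ)) : ℕ := Nat.find (fret_ex p)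

lemma fret_spec {n : ℕ} {p : List (ℕ × ℕ)} (hn : 1 ≤ n) (hp : p ∈ CatS n) :
    0 < fret p ∧ fret p ≤ p.length ∧
      part Prod.fst p (fret p) = part Prod.snd p (fret p) ∧
      (∀ j, 0 < j → j < fret p → part Prod.fst p j < part Prod.snd p j) := by
  obtain ⟨hp1, hcat⟩ := hp
  have hne : p ≠ [] := path_ne_nil hp1 hn
  have hlp : 0 < p.length := List.length_pos_iff.mpr hne
  have hle : fret p ≤ p.length := Nat.find_min' _ ⟨hlp, Or.inr le_rfl⟩
  have hspec : 0 < fret p ∧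
      (part Prod.fst p (fret p) = part Prod.snd p (fret p) ∨ p.length ≤ fret p) :=
    Nat.find_spec (fret_ex p)
  refine ⟨hspec.1, hle, ?_, ?_⟩
  · rcases hspec.2 with h | h
    · exact h
    · have : fret p = p.length := by omega
      rw [this]
      have hx := hp1.2.1
      have hy := hp1.2.2
      rw [xPart_eq] at hx
      rw [yPart_eq] at hy
      omega
  · intro j hj0 hjk
    have hmin := Nat.find_min (fret_ex p) hjk
    push_neg at hmin
    have h1 := (hmin hj0).1
    have h2 := (hmin hj0).2
    have h3 := hcat j (by omega)
    rw [xPart_eq, yPart_eq] at h3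
    omega

lemma frh_bounds {n : ℕ} {p : List (ℕ × ℕ)} (hn : 1 ≤ n) (hp : p ∈ CatS n) :
    1 ≤ part Prod.fst p (fret p) ∧ part Prod.fst p (fret p) ≤ n := by
  obtain ⟨hk0, hkl, heq, -⟩ := fret_spec hn hp
  constructor
  · obtain ⟨a, t, ha, hpe⟩ := first_vert hp.1 (path_ne_nil hp.1 hn)
      (hp.2 1 (by
        have := List.length_pos_iff.mpr (path_ne_nil hp.1 hn)
        omega))
    have h1 : part Prod.snd p 1 = a := by
      rw [hpe]
      simpa using part_cons_succ Prod.snd (0, a) t 0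
    have h2 : part Prod.snd p 1 ≤ part Prod.snd p (fret p) := part_mono _ _ hk0
    omega
  · have h1 : part Prod.fst p (fret p) ≤ part Prod.fst p p.length := part_mono _ _ hkl
    have hx := hp.1.2.1
    rw [xPart_eq] at hx
    omega

lemma take_mem_PrmS {n : ℕ} {p : List (ℕ × ℕ)} (hn : 1 ≤ n) (hp : p ∈ CatS n) :
    p.take (fret p) ∈ PrmS (part Prod.fst p (fret p)) := by
  obtain ⟨hk0, hkl, heq, hstrict⟩ := fret_spec hn hp
  have hlen : (p.take (fret p)).length = fret p := by simp [hkl]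
  refine ⟨⟨fun st hst => hp.1.1 st (List.take_subset _ _ hst), ?_, ?_⟩, ?_⟩
  · rw [xPart_eq, hlen, part_take, Nat.min_self]
  · rw [yPart_eq, hlen, part_take, Nat.min_self]
    omega
  · intro j hj0 hjl
    rw [hlen] at hjl
    rw [xPart_eq, yPart_eq, part_take, part_take, Nat.min_eq_left (by omega)]
    exact hstrict j hj0 hjl

lemma drop_mem_CatS {n : ℕ} {p : List (ℕ × ℕ)} (hn : 1 ≤ n) (hp : p ∈ CatS n) :
    p.drop (fret p) ∈ CatS (n - part Prod.fst p (fret p)) := by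
  obtain ⟨hk0, hkl, heq, hstrict⟩ := fret_spec hn hp
  obtain ⟨hm1, hm2⟩ := frh_bounds hn hp
  have hlen : (p.drop (fret p)).length = p.length - fret p := by simp
  have hx := hp.1.2.1
  have hy := hp.1.2.2
  rw [xPart_eq] at hx
  rw [yPart_eq] at hy
  have hxa := part_add Prod.fst p (p.length - fret p) hkl
  have hya := part_add Prod.snd p (p.length - fret p) hkl
  rw [show fret p + (p.length - fret p) = p.length by omega] at hxa hya
  refine ⟨⟨fun st hst => hp.1.1 st (List.drop_subset _ _ hst), ?_, ?_⟩, ?_⟩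
  · rw [xPart_eq, hlen]
    omega
  · rw [yPart_eq, hlen]
    omega
  · intro j hj
    rw [hlen] at hj
    have hxa' := part_add Prod.fst p j hkl
    have hya' := part_add Prod.snd p j hkl
    have hcat := hp.2 (fret p + j) (by omega)
    rw [xPart_eq, yPart_eq] at hcat
    rw [xPart_eq, yPart_eq]
    omega

lemma append_mem_CatS {n m : ℕ} {a b : List (ℕ × ℕ)} (hm1 : 1 ≤ m) (hmn : m ≤ n)
    (ha : a ∈ PrmS m) (hb : b ∈ CatS (n - m)) : a ++ b ∈ CatS n := by
  have hxa := ha.1.2.1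
  have hya := ha.1.2.2
  rw [xPart_eq] at hxa
  rw [yPart_eq] at hya
  have hxb := hb.1.2.1
  have hyb := hb.1.2.2
  rw [xPart_eq] at hxb
  rw [yPart_eq] at hyb
  have hlen : (a ++ b).length = a.length + b.length := by simp
  refine ⟨⟨?_, ?_, ?_⟩, ?_⟩
  · intro st hst
    rcases List.mem_append.mp hst with h | h
    · exact ha.1.1 st h
    · exact hb.1.1 st h
  · rw [xPart_eq, hlen, part_append]
    omega
  · rw [yPart_eq, hlen, part_append]
    omega
  · intro j hj
    rw [hlen] at hj
    rcases Nat.lt_or_ge j (a.length + 1) with h | h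
    · have hj' : j ≤ a.length := by omega
      rw [xPart_eq, yPart_eq, part_append_left _ _ _ hj', part_append_left _ _ _ hj']
      rcases Nat.eq_zero_or_pos j with rfl | hj0
      · simp
      · rcases Nat.lt_or_ge j a.length with h2 | h2
        · exact le_of_lt (ha.2 j hj0 h2)
        · have : j = a.length := by omega
          subst this
          omega
    · obtain ⟨i, rfl⟩ : ∃ i, j = a.length + i := ⟨j - a.length, by omega⟩
      rw [xPart_eq, yPart_eq, part_append, part_append]
      have := hb.2 i (by omega)
      rw [xPart_eq, yPart_eq] at this
      omega

lemma fret_append {n m : ℕ} {a b : List (ℕ × ℕ)} (hm1 : 1 ≤ m) (hmn : m ≤ n) (hn : 1 ≤ n)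
    (ha : a ∈ PrmS m) (hb : b ∈ CatS (n - m)) : fret (a ++ b) = a.length := by
  have hne : a ≠ [] := path_ne_nil ha.1 hm1
  have hla : 0 < a.length := List.length_pos_iff.mpr hne
  have hxa := ha.1.2.1
  have hya := ha.1.2.2
  rw [xPart_eq] at hxa
  rw [yPart_eq] at hya
  have hle : fret (a ++ b) ≤ a.length := by
    apply Nat.find_min' _ ?_
    refine ⟨hla, Or.inl ?_⟩
    rw [part_append_left _ _ _ le_rfl, part_append_left _ _ _ le_rfl]
    omega
  have hcab : a ++ b ∈ CatS n := append_mem_CatS hm1 hmn ha hb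
  obtain ⟨hk0, -, heq, -⟩ := fret_spec hn hcab
  by_contra hne2
  have hlt : fret (a ++ b) < a.length := by omega
  have h1 : part Prod.fst (a ++ b) (fret (a ++ b)) = part Prod.fst a (fret (a ++ b)) :=
    part_append_left _ _ _ (by omega)
  have h2 : part Prod.snd (a ++ b) (fret (a ++ b)) = part Prod.snd a (fret (a ++ b)) :=
    part_append_left _ _ _ (by omega)
  have := ha.2 (fret (a ++ b)) hk0 hlt
  rw [xPart_eq, yPart_eq] at this
  omega

lemma sigma_ext {n : ℕ} {T U : ℕ → Set (List (ℕ × ℕ))}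
    (x y : Σ i : Fin n, ↥(T i.1) × ↥(U i.1))
    (h1 : x.1.1 = y.1.1) (h2 : x.2.1.1 = y.2.1.1) (h3 : x.2.2.1 = y.2.2.1) : x = y := by
  obtain ⟨⟨i, hi⟩, ⟨a, ha⟩, ⟨b, hb⟩⟩ := x
  obtain ⟨⟨i', hi'⟩, ⟨a', ha'⟩, ⟨b', hb'⟩⟩ := y
  simp only at h1 h2 h3
  subst h1
  subst h2
  subst h3
  rfl

lemma card_CatS_rec {n : ℕ} (hn : 1 ≤ n) :
    Nat.card (CatS n) =
      ∑ i : Fin n, Nat.card (PrmS (i.1 + 1)) * Nat.card (CatS (n - (i.1 + 1))) := by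
  classical
  have key : Nat.card (CatS n) =
      Nat.card (Σ i : Fin n, ↥(PrmS (i.1 + 1)) × ↥(CatS (n - (i.1 + 1)))) := by
    apply Nat.card_eq_of_bijective
      (f := fun x : ↥(CatS n) =>
        (⟨⟨part Prod.fst x.1 (fret x.1) - 1, by
            have := frh_bounds hn x.2; omega⟩,
          ⟨x.1.take (fret x.1), by
            have h := take_mem_PrmS hn x.2
            have hb := frh_bounds hn x.2
            have he : part Prod.fst x.1 (fret x.1) - 1 + 1 = part Prod.fst x.1 (fret x.1) := by
              omega
            rw [he]
            exact h⟩,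
          ⟨x.1.drop (fret x.1), by
            have h := drop_mem_CatS hn x.2
            have hb := frh_bounds hn x.2
            have he : part Prod.fst x.1 (fret x.1) - 1 + 1 = part Prod.fst x.1 (fret x.1) := by
              omega
            rw [he]
            exact h⟩⟩ :
          Σ i : Fin n, ↥(PrmS (i.1 + 1)) × ↥(CatS (n - (i.1 + 1)))))
    constructor
    · intro x y h
      apply Subtype.ext
      have h2 : x.1.take (fret x.1) = y.1.take (fret y.1) := congrArg (fun t => t.2.1.1) h
      have h3 : x.1.drop (fret x.1) = y.1.drop (fret y.1) := congrArg (fun t => t.2.2.1) h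
      calc x.1 = x.1.take (fret x.1) ++ x.1.drop (fret x.1) := (List.take_append_drop _ _).symm
        _ = y.1.take (fret y.1) ++ y.1.drop (fret y.1) := by rw [h2, h3]
        _ = y.1 := List.take_append_drop _ _
    · rintro ⟨⟨i, hi⟩, ⟨a, ha⟩, ⟨b, hb⟩⟩
      have hm1 : 1 ≤ i + 1 := by omega
      have hmn : i + 1 ≤ n := by omega
      have hcab : a ++ b ∈ CatS n := append_mem_CatS hm1 hmn ha hb
      have hfr : fret (a ++ b) = a.length := fret_append hm1 hmn hn ha hb
      have hxa := ha.1.2.1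
      rw [xPart_eq] at hxa
      have hfrh : part Prod.fst (a ++ b) (fret (a ++ b)) = i + 1 := by
        rw [hfr, part_append_left _ _ _ le_rfl]
        exact hxa
      refine ⟨⟨a ++ b, hcab⟩, ?_⟩
      apply sigma_ext (T := fun j => PrmS (j + 1)) (U := fun j => CatS (n - (j + 1)))
      · simp only [hfrh]
        omega
      · simp only [hfr]
        exact List.take_left
      · simp only [hfr]
        exact List.drop_left
  rw [key]
  haveI : ∀ i : Fin n, Finite (↥(PrmS (i.1 + 1)) × ↥(CatS (n - (i.1 + 1)))) := by
    intro i
    haveI h1 : Finite ↥(PrmS (i.1 + 1)) := (finite_PrmS _).to_subtype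
    haveI h2 : Finite ↥(CatS (n - (i.1 + 1))) := (finite_CatS _).to_subtype
    infer_instance
  haveI : ∀ i : Fin n, Fintype (↥(PrmS (i.1 + 1)) × ↥(CatS (n - (i.1 + 1)))) := fun i =>
    Fintype.ofFinite _
  rw [Nat.card_eq_fintype_card, Fintype.card_sigma]
  congr 1
  funext i
  rw [← Nat.card_eq_fintype_card, Nat.card_prod]

end RookProof

namespace RookProof

lemma pCatalan_card (n : ℕ) : pCatalan rookSteps n = Nat.card (CatS n) := by
  rw [pCatalan_eq, ← Nat.card_coe_set_eq]

lemma pCatalan_rec (m : ℕ) :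
    pCatalan rookSteps (m + 1) + 3 * pCatalan rookSteps m =
      4 * ∑ i ∈ Finset.range (m + 1), pCatalan rookSteps i * pCatalan rookSteps (m - i) := by
  have h1 := card_CatS_rec (n := m + 1) (by omega)
  rw [Fin.sum_univ_eq_sum_range
    (fun i => Nat.card (PrmS (i + 1)) * Nat.card (CatS (m + 1 - (i + 1))))] at h1
  rw [Finset.sum_range_succ'] at h1
  have h2 : ∀ i ∈ Finset.range m,
      Nat.card (PrmS (i + 1 + 1)) * Nat.card (CatS (m + 1 - (i + 1 + 1))) =
        4 * (pCatalan rookSteps (i + 1) * pCatalan rookSteps (m - 1 - i)) := by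
    intro i hi
    rw [card_PrmS (by omega), show i + 1 + 1 - 1 = i + 1 by omega,
      show m + 1 - (i + 1 + 1) = m - 1 - i by omega, ← pCatalan_card]
    ring
  rw [Finset.sum_congr rfl h2, ← Finset.mul_sum, card_PrmS_one] at h1
  simp only [← pCatalan_card] at h1
  rw [Finset.sum_range_succ']
  have h3 : ∀ i ∈ Finset.range m,
      pCatalan rookSteps (i + 1) * pCatalan rookSteps (m - (i + 1)) =
        pCatalan rookSteps (i + 1) * pCatalan rookSteps (m - 1 - i) := by
    intro i hi
    rw [show m - (i + 1) = m - 1 - i by omega]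
  rw [Finset.sum_congr rfl h3, pCatalan_zero]
  simp only [Nat.sub_zero, one_mul] at h1 ⊢
  rw [show m + 1 - (0 + 1) = m by omega] at h1
  omega

end RookProof

theorem stmt4 (P : PowerSeries ℚ)
    (hP : P = PowerSeries.mk fun n => (pCatalan rookSteps n : ℚ)) :
    4 * PowerSeries.X * P ^ 2 - (1 + 3 * PowerSeries.X) * P + 1 = 0 := by
  have hcoeff : ∀ n, PowerSeries.coeff n P = (pCatalan rookSteps n : ℚ) := by
    intro n
    rw [hP, PowerSeries.coeff_mk]
  have key : P + (PowerSeries.C (R := ℚ)) 3 * (PowerSeries.X * P) =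
      (PowerSeries.C (R := ℚ)) 4 * (PowerSeries.X * (P * P)) + 1 := by
    ext n
    rw [map_add, map_add, PowerSeries.coeff_C_mul, PowerSeries.coeff_C_mul]
    cases n with
    | zero =>
        have hX : ∀ f : PowerSeries ℚ, PowerSeries.coeff 0 (PowerSeries.X * f) = 0 := by
          intro f
          rw [PowerSeries.coeff_zero_eq_constantCoeff, map_mul, PowerSeries.constantCoeff_X,
            zero_mul]
        rw [hX, hX, hcoeff, RookProof.pCatalan_zero]
        simp
    | succ k =>
        rw [PowerSeries.coeff_succ_X_mul, PowerSeries.coeff_succ_X_mul, hcoeff, hcoeff,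
          PowerSeries.coeff_mul, PowerSeries.coeff_one]
        have hsum : ∑ x ∈ Finset.HasAntidiagonal.antidiagonal k,
            PowerSeries.coeff x.1 P * PowerSeries.coeff x.2 P =
            ∑ i ∈ Finset.range (k + 1),
              (pCatalan rookSteps i : ℚ) * (pCatalan rookSteps (k - i) : ℚ) := by
          rw [Finset.Nat.sum_antidiagonal_eq_sum_range_succ_mk]
          exact Finset.sum_congr rfl fun i _ => by rw [hcoeff, hcoeff]
        rw [hsum]
        have := RookProof.pCatalan_rec k
        have hq : ((pCatalan rookSteps (k + 1) + 3 * pCatalan rookSteps k : ℕ) : ℚ) =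
            ((4 * ∑ i ∈ Finset.range (k + 1),
              pCatalan rookSteps i * pCatalan rookSteps (k - i) : ℕ) : ℚ) := by
          exact_mod_cast congrArg (fun x : ℕ => (x : ℚ)) this
        push_cast at hq
        simp only [Nat.succ_ne_zero, if_false]
        linarith
  have c3 : (PowerSeries.C (R := ℚ)) 3 = (3 : PowerSeries ℚ) := by
    simp [map_ofNat]
  have c4 : (PowerSeries.C (R := ℚ)) 4 = (4 : PowerSeries ℚ) := by
    simp [map_ofNat]
  rw [c3, c4] at key
  linear_combination -key
end
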